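/- arXiv:math/0610185 — 6 statements merged into one kernel-verified Lean document; each statement's English description precedes it below -/
import Mathlib

section
/- The sequence of Eulerian numbers {A_{n,i}}_{i=0}^{n-1} is unimodal: A_{n,0} ≤ A_{n,1} ≤ ⋯ ≤ A_{n,⌊(n-1)/2⌋} and A_{n,⌈(n-1)/2⌉} ≥ ⋯ ≥ A_{n,n-1}. -/
namespace FS

/-- The word `a_0, a_1, ..., a_n, a_{n+1}` of the permutation (as a list `l` of length `n`),
with the boundary convention `a_0 = a_{n+1} = n+1`. -/
def wordext (n : ℕ) (l : List ℕ) : ℕ → ℕ := fun i => ((n + 1) :: (l ++ [n + 1])).getD i 0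

/-- Number of descents of the word `l`. -/
def desL (l : List ℕ) : ℕ := (l.zip l.tail).countP (fun p => decide (p.2 < p.1))

/-- Number of peaks (boundary convention `a_0 = a_{n+1} = n+1`). -/
def peakL (n : ℕ) (l : List ℕ) : ℕ :=
  ((Finset.Icc 1 n).filter (fun k =>
    wordext n l (k - 1) < wordext n l k ∧ wordext n l (k + 1) < wordext n l k)).card

def valleyL (n : ℕ) (l : List ℕ) : ℕ :=
  ((Finset.Icc 1 n).filter (fun k =>
    wordext n l k < wordext n l (k - 1) ∧ wordext n l k < wordext n l (k + 1))).card

/-- Number of double ascents. -/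
def daL (n : ℕ) (l : List ℕ) : ℕ :=
  ((Finset.Icc 1 n).filter (fun k =>
    wordext n l (k - 1) < wordext n l k ∧ wordext n l k < wordext n l (k + 1))).card

/-- Number of double descents. -/
def ddL (n : ℕ) (l : List ℕ) : ℕ :=
  ((Finset.Icc 1 n).filter (fun k =>
    wordext n l k < wordext n l (k - 1) ∧ wordext n l (k + 1) < wordext n l k)).card

/-- All permutations of `[n] = {1, ..., n}` as lists. -/
def perms (n : ℕ) : List (List ℕ) := (List.range' 1 n).permutations

open List

lemma desL_nil : desL ([] : List ℕ) = 0 := rfl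
lemma desL_single (x : ℕ) : desL [x] = 0 := rfl

lemma desL_cons2 (x y : ℕ) (t : List ℕ) :
    desL (x :: y :: t) = (if y < x then 1 else 0) + desL (y :: t) := by
  simp only [desL, List.tail_cons, List.zip_cons_cons, List.countP_cons]
  split <;> simp_all <;> omega

lemma desL_le (y : ℕ) (t : List ℕ) : desL (y :: t) ≤ t.length := by
  have h := List.countP_le_length (p := fun p : ℕ × ℕ => decide (p.2 < p.1))
    (l := (y :: t).zip (y :: t).tail)
  simpa [desL, Nat.min_def] using h

/-- Counting descents over all insertions of a maximal element, "cons" version. -/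
lemma countP_aux_cons : ∀ (t : List ℕ) (a b i : ℕ), (∀ x ∈ t, x < a) → b < a →
    ((List.permutations'Aux a t).map (b :: ·)).countP (fun l => decide (desL l = i)) =
      (if i = desL (b :: t) then desL (b :: t) + 1 else 0) +
      (if i = desL (b :: t) + 1 then t.length - desL (b :: t) else 0) := by
  intro t
  induction t with
  | nil =>
    intro a b i ha hb
    have h1 : desL [b, a] = 0 := by
      rw [desL_cons2, desL_single]
      rw [if_neg (by omega)]
    simp only [List.permutations'Aux, List.map_cons, List.map_nil, List.countP_cons,
      List.countP_nil, h1, desL_single, List.length_nil, decide_eq_true_eq]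
    rcases i with _ | i <;> simp_all <;> omega
  | cons u t' ih =>
    intro a b i ha hb
    have hua : u < a := ha u (by simp)
    have hta : ∀ x ∈ t', x < a := fun x hx => ha x (by simp [hx])
    have hd : desL (u :: t') ≤ t'.length := desL_le u t'
    -- unfold one step
    have hux : ((List.permutations'Aux a (u :: t')).map (b :: ·)).countP
        (fun l => decide (desL l = i)) =
        (if desL (b :: a :: u :: t') = i then 1 else 0) +
        (List.permutations'Aux a t').countP (fun l => decide (desL (b :: u :: l) = i)) := by
      simp only [List.permutations'Aux, List.map_cons, List.countP_cons, List.map_map]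
      rw [List.countP_map]
      simp only [Function.comp_def]
      split <;> rename_i h <;> simp only [decide_eq_true_eq] at h <;> split_ifs <;> omega
    rw [hux]
    have hfirst : desL (b :: a :: u :: t') = 1 + desL (u :: t') := by
      rw [desL_cons2, desL_cons2]
      have h1 : ¬ a < b := by omega
      simp [h1, hua]
    by_cases hc : u < b
    · -- c = 1
      have hpred : ∀ l, desL (b :: u :: l) = 1 + desL (u :: l) := by
        intro l; rw [desL_cons2]; simp [hc]
      by_cases hi : i = 0
      · have hz : (List.permutations'Aux a t').countP
            (fun l => decide (desL (b :: u :: l) = i)) = 0 := by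
          rw [List.countP_eq_zero]
          intro l _
          simp [hpred, hi]
        subst hi
        rw [hz, hfirst, hpred t']
        rw [if_neg (by omega : ¬ (1 + desL (u :: t') = 0)),
          if_neg (by omega : ¬ ((0:ℕ) = 1 + desL (u :: t'))),
          if_neg (by omega : ¬ ((0:ℕ) = 1 + desL (u :: t') + 1))]
      · obtain ⟨i', rfl⟩ : ∃ i', i = i' + 1 := ⟨i - 1, by omega⟩
        have hcongr : (List.permutations'Aux a t').countP
            (fun l => decide (desL (b :: u :: l) = i' + 1)) =
            (List.permutations'Aux a t').countP
            (fun l => decide (desL (u :: l) = i')) := by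
          apply List.countP_congr
          intro l _
          simp [hpred]
          omega
        rw [hcongr]
        have h2 : (List.permutations'Aux a t').countP (fun l => decide (desL (u :: l) = i')) =
            ((List.permutations'Aux a t').map (u :: ·)).countP
              (fun l => decide (desL l = i')) := by
          rw [List.countP_map]; rfl
        rw [h2, ih a u i' hta hua]
        rw [hfirst]
        have hdbt : desL (b :: u :: t') = 1 + desL (u :: t') := hpred t'
        rw [hdbt]
        simp only [List.length_cons]
        split_ifs <;> omega
    · -- c = 0
      have hpred : ∀ l, desL (b :: u :: l) = desL (u :: l) := by
        intro l; rw [desL_cons2]; simp [hc]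
      have hcongr : (List.permutations'Aux a t').countP
          (fun l => decide (desL (b :: u :: l) = i)) =
          ((List.permutations'Aux a t').map (u :: ·)).countP
            (fun l => decide (desL l = i)) := by
        rw [List.countP_map]
        apply List.countP_congr
        intro l _
        simp [hpred, Function.comp]
      rw [hcongr, ih a u i hta hua]
      have hdbt : desL (b :: u :: t') = desL (u :: t') := hpred t'
      rw [hfirst, hdbt]
      simp only [List.length_cons]
      split_ifs <;> omega

/-- Counting descents over all insertions of a maximal element. -/
lemma countP_aux (t : List ℕ) (a i : ℕ) (ha : ∀ x ∈ t, x < a) :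
    (List.permutations'Aux a t).countP (fun l => decide (desL l = i)) =
      (if i = desL t then desL t + 1 else 0) +
      (if i = desL t + 1 then t.length - desL t else 0) := by
  cases t with
  | nil =>
    simp only [List.permutations'Aux, List.countP_cons, List.countP_nil, desL_nil, desL_single,
      List.length_nil]
    rcases i with _ | i <;> simp_all <;> omega
  | cons b t' =>
    have hba : b < a := ha b (by simp)
    have hta : ∀ x ∈ t', x < a := fun x hx => ha x (by simp [hx])
    have hd : desL (b :: t') ≤ t'.length := desL_le b t'
    have h1 : desL (a :: b :: t') = 1 + desL (b :: t') := by
      rw [desL_cons2]; simp [hba]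
    simp only [List.permutations'Aux, List.countP_cons]
    rw [countP_aux_cons t' a b i hta hba]
    simp only [List.length_cons, h1]
    split_ifs <;> simp_all <;> omega

lemma sum_map_ite (L : List (List ℕ)) (j c : ℕ) :
    (L.map (fun m => if desL m = j then c else 0)).sum =
      c * L.countP (fun m => decide (desL m = j)) := by
  induction L with
  | nil => simp
  | cons m L ih =>
    simp only [List.map_cons, List.sum_cons, List.countP_cons, ih]
    split_ifs <;> simp_all <;> ring

def A (n i : ℕ) : ℕ := (perms n).countP (fun l => decide (desL l = i))

lemma A_eq_perms' (n i : ℕ) :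
    A n i = ((List.range' 1 n).permutations').countP (fun l => decide (desL l = i)) :=
  (List.permutations_perm_permutations' _).countP_eq _

lemma perm_range_succ (n : ℕ) : List.range' 1 (n + 1) ~ (n + 1) :: List.range' 1 n := by
  have h := List.range'_concat (step := 1) (s := 1) (n := n)
  simp only [one_mul] at h
  rw [h, Nat.add_comm 1 n]
  exact List.perm_append_singleton _ _

lemma A_succ_sum (n i : ℕ) : A (n + 1) i =
    (((List.range' 1 n).permutations').map (fun m =>
      (if i = desL m then desL m + 1 else 0) +
      (if i = desL m + 1 then n - desL m else 0))).sum := by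
  rw [A_eq_perms']
  rw [(perm_range_succ n).permutations'.countP_eq]
  show (((List.range' 1 n).permutations').flatMap (List.permutations'Aux (n + 1))).countP _ = _
  rw [List.flatMap, List.countP_flatten, List.map_map]
  congr 1
  apply List.map_congr_left
  intro m hm
  have hperm : m ~ List.range' 1 n := List.mem_permutations'.1 hm
  have hlen : m.length = n := by rw [hperm.length_eq]; simp
  have hlt : ∀ x ∈ m, x < n + 1 := by
    intro x hx
    have := hperm.mem_iff.1 hx
    rw [List.mem_range'_1] at this
    omega
  simp only [Function.comp_apply]
  rw [countP_aux m (n + 1) i hlt, hlen]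

lemma sum_map_add {α : Type*} (L : List α) (f g : α → ℕ) :
    (L.map (fun x => f x + g x)).sum = (L.map f).sum + (L.map g).sum := by
  induction L with
  | nil => simp
  | cons x L ih => simp [ih]; omega

lemma A_rec0 (n : ℕ) : A (n + 1) 0 = A n 0 := by
  rw [A_succ_sum]
  have : (((List.range' 1 n).permutations').map (fun m =>
      (if 0 = desL m then desL m + 1 else 0) + (if 0 = desL m + 1 then n - desL m else 0))).sum =
      (((List.range' 1 n).permutations').map (fun m => if desL m = 0 then 1 else 0)).sum := by
    congr 1
    apply List.map_congr_left
    intro m _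
    split_ifs <;> first | contradiction | omega
  rw [this, sum_map_ite, one_mul, A_eq_perms']

lemma A_recS (n i : ℕ) : A (n + 1) (i + 1) =
    (i + 2) * A n (i + 1) + (n - i) * A n i := by
  rw [A_succ_sum]
  have : (((List.range' 1 n).permutations').map (fun m =>
      (if i + 1 = desL m then desL m + 1 else 0) +
      (if i + 1 = desL m + 1 then n - desL m else 0))).sum =
      (((List.range' 1 n).permutations').map (fun m =>
        (if desL m = i + 1 then i + 2 else 0) + (if desL m = i then n - i else 0))).sum := by
    congr 1
    apply List.map_congr_left
    intro m _
    have h1 : (if i + 1 = desL m then desL m + 1 else 0) =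
        (if desL m = i + 1 then i + 2 else 0) := by split_ifs <;> omega
    have h2 : (if i + 1 = desL m + 1 then n - desL m else 0) =
        (if desL m = i then n - i else 0) := by split_ifs <;> omega
    rw [h1, h2]
  rw [this, sum_map_add, sum_map_ite, sum_map_ite, A_eq_perms', A_eq_perms']

lemma desL_append_singleton : ∀ (t : List ℕ) (y x : ℕ),
    desL ((y :: t) ++ [x]) = desL (y :: t) +
      (if x < (y :: t).getLast (by simp) then 1 else 0) := by
  intro t
  induction t with
  | nil =>
    intro y x
    rw [List.cons_append, List.nil_append, desL_cons2, desL_single, desL_single]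
    simp only [List.getLast_singleton]
    by_cases h : x < y <;> simp [h]
  | cons z t' ih =>
    intro y x
    have e : ((y :: z :: t') ++ [x] : List ℕ) = y :: z :: (t' ++ [x]) := by simp
    rw [e, desL_cons2]
    have e2 : (z :: (t' ++ [x]) : List ℕ) = (z :: t') ++ [x] := by simp
    rw [e2, ih z x, desL_cons2]
    rw [List.getLast_cons (by simp : (z :: t') ≠ [])]
    omega

lemma desL_reverse : ∀ (l : List ℕ), l.Nodup → desL l.reverse + desL l = l.length - 1 := by
  intro l
  induction l with
  | nil => simp [desL_nil]
  | cons y t ih =>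
    intro hnd
    have hndt : t.Nodup := hnd.of_cons
    cases t with
    | nil => simp [desL_nil, desL_single]
    | cons z t' =>
      have hne : (z :: t' : List ℕ).reverse ≠ [] := by simp
      obtain ⟨c, r, hr⟩ : ∃ c r, (z :: t' : List ℕ).reverse = c :: r := by
        cases h : (z :: t' : List ℕ).reverse with
        | nil => exact absurd h hne
        | cons c r => exact ⟨c, r, rfl⟩
      have hrev : (y :: z :: t' : List ℕ).reverse = (c :: r) ++ [y] := by
        rw [List.reverse_cons, hr]
      have hlast : (c :: r).getLast (by simp) = z := by
        have : (c :: r).getLast (by simp) = ((z :: t').reverse).getLast hne := by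
          congr 1; exact hr.symm
        rw [this, List.getLast_reverse]
        simp
      rw [hrev, desL_append_singleton r c y, hlast]
      rw [desL_cons2]
      have hih := ih hndt
      rw [hr] at hih
      have hyz : y ≠ z := by
        intro h
        exact (List.nodup_cons.1 hnd).1 (h ▸ List.mem_cons_self)
      have hd1 : desL (y :: z :: t') ≤ (z :: t').length := desL_le _ _
      simp only [List.length_cons] at *
      split_ifs with h1 h2 <;> omega

lemma desL_le_sub (l : List ℕ) : desL l ≤ l.length - 1 := by
  cases l with
  | nil => simp [desL_nil]
  | cons y t => simpa using desL_le y t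

lemma perms_nodup (n : ℕ) : (perms n).Nodup :=
  List.nodup_permutations _ (List.nodup_range' _)

lemma A_symm (n i : ℕ) (hn : 1 ≤ n) (hi : i ≤ n - 1) : A n i = A n (n - 1 - i) := by
  have hperm : (perms n).map List.reverse ~ perms n := by
    rw [List.perm_ext_iff_of_nodup ((perms_nodup n).map List.reverse_injective) (perms_nodup n)]
    intro l
    simp only [List.mem_map]
    constructor
    · rintro ⟨m, hm, rfl⟩
      have : m ~ List.range' 1 n := List.mem_permutations.1 hm
      exact List.mem_permutations.2 ((m.reverse_perm).trans this)
    · intro hl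
      refine ⟨l.reverse, ?_, by simp⟩
      have : l ~ List.range' 1 n := List.mem_permutations.1 hl
      exact List.mem_permutations.2 ((List.reverse_perm l).trans this)
  have h1 : A n i = ((perms n).map List.reverse).countP (fun l => decide (desL l = i)) :=
    (hperm.countP_eq _).symm
  rw [h1, List.countP_map]
  apply List.countP_congr
  intro l hl
  have hlp : l ~ List.range' 1 n := List.mem_permutations.1 hl
  have hnd : l.Nodup := hlp.nodup_iff.2 (List.nodup_range' _)
  have hlen : l.length = n := by rw [hlp.length_eq]; simp
  have hrev := desL_reverse l hnd
  have hle := desL_le_sub l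
  rw [hlen] at hrev hle
  simp only [Function.comp_apply, decide_eq_true_eq]
  omega

lemma A_step : ∀ n k : ℕ, 2 * k + 2 ≤ n → A n k ≤ A n (k + 1) := by
  intro n
  induction n with
  | zero => intro k h; omega
  | succ n ih =>
    intro k hk
    by_cases heq : 2 * k + 2 = n + 1
    · have h1 : A (n + 1) k = A (n + 1) (n + 1 - 1 - k) :=
        A_symm (n + 1) k (by omega) (by omega)
      have h2 : n + 1 - 1 - k = k + 1 := by omega
      rw [h2] at h1
      exact le_of_eq h1
    · have hk' : 2 * k + 2 ≤ n := by omega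
      cases k with
      | zero =>
        rw [A_rec0, A_recS]
        have hn2 : 2 ≤ n := by omega
        have : n - 0 = n := by omega
        rw [this]
        calc A n 0 = 1 * A n 0 := (one_mul _).symm
          _ ≤ n * A n 0 := Nat.mul_le_mul_right _ (by omega)
          _ ≤ 2 * A n 1 + n * A n 0 := Nat.le_add_left _ _
      | succ j =>
        have h1 : A n j ≤ A n (j + 1) := ih j (by omega)
        have h2 : A n (j + 1) ≤ A n (j + 2) := ih (j + 1) (by omega)
        rw [A_recS, A_recS]
        obtain ⟨r, hr⟩ : ∃ r, n = 2 * j + 4 + r := ⟨n - (2 * j + 4), by omega⟩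
        subst hr
        have e1 : 2 * j + 4 + r - j = j + 4 + r := by omega
        have e2 : 2 * j + 4 + r - (j + 1) = j + 3 + r := by omega
        rw [e1, e2]
        calc (j + 2) * A (2 * j + 4 + r) (j + 1) + (j + 4 + r) * A (2 * j + 4 + r) j
            ≤ (j + 2) * A (2 * j + 4 + r) (j + 1) + (j + 4 + r) * A (2 * j + 4 + r) (j + 1) :=
              Nat.add_le_add_left (Nat.mul_le_mul_left _ h1) _
          _ = (j + 3) * A (2 * j + 4 + r) (j + 1) + (j + 3 + r) * A (2 * j + 4 + r) (j + 1) := by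
              ring
          _ ≤ (j + 3) * A (2 * j + 4 + r) (j + 2) + (j + 3 + r) * A (2 * j + 4 + r) (j + 1) :=
              Nat.add_le_add_right (Nat.mul_le_mul_left _ h2) _

lemma A_mono (n : ℕ) : ∀ j, 2 * j ≤ n → ∀ i, i ≤ j → A n i ≤ A n j := by
  intro j
  induction j with
  | zero =>
    intro _ i hi
    have : i = 0 := by omega
    subst this
    exact le_refl _
  | succ j ih =>
    intro hj i hi
    rcases Nat.lt_or_ge i (j + 1) with h | h
    · exact le_trans (ih (by omega) i (by omega)) (A_step n j (by omega))
    · have : i = j + 1 := by omega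
      subst this
      exact le_refl _

/-- the Eulerian numbers `A_{n,0}, …, A_{n,n-1}` form a unimodal sequence:
increasing up to `⌊(n-1)/2⌋` and decreasing from `⌈(n-1)/2⌉` on. -/
theorem eulerian_unimodal (n : ℕ) (hn : 1 ≤ n) :
    (∀ i j, i ≤ j → j ≤ (n - 1) / 2 →
      (perms n).countP (fun l => decide (desL l = i)) ≤
        (perms n).countP (fun l => decide (desL l = j))) ∧
    (∀ i j, n / 2 ≤ i → i ≤ j → j ≤ n - 1 →
      (perms n).countP (fun l => decide (desL l = j)) ≤
        (perms n).countP (fun l => decide (desL l = i))) := by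
  constructor
  · intro i j hij hj
    show A n i ≤ A n j
    exact A_mono n j (by omega) i hij
  · intro i j hi hij hj
    show A n j ≤ A n i
    rw [A_symm n j hn hj, A_symm n i hn (le_trans hij hj)]
    exact A_mono n (n - 1 - i) (by omega) (n - 1 - j) (by omega)

end FS
end

section
/- If a polynomial p(t) = Σ_{i=0}^d a_i t^i with nonnegative real coefficients satisfies p(t) = Σ_{i=0}^{⌊d/2⌋} b_i t^i (1+t)^{d-2i} with all b_i ≥ 0, then the coefficient sequence {a_i}_{i=0}^d is symmetric (a_i = a_{d-i} for all i) and unimodal. -/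
namespace FS

open Polynomial Finset
lemma choose_mono_half (m : ℕ) : ∀ {k k' : ℕ}, k ≤ k' → k' ≤ (m+1)/2 → m.choose k ≤ m.choose k' := by
  intro k k' h h2
  induction k' with
  | zero => simp [Nat.le_zero.mp h]
  | succ n ih =>
    rcases Nat.eq_or_lt_of_le h with rfl | hlt
    · exact le_rfl
    have h1 : m.choose k ≤ m.choose n := ih (by omega) (by omega)
    refine h1.trans ?_
    rcases Nat.lt_or_ge n (m/2) with hn | hn
    · exact Nat.choose_le_succ_of_lt_half_left hn
    · have hm : m = 2*n+1 := by omega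
      have := Nat.choose_symm (n := m) (k := n+1) (by omega)
      have he : m - (n+1) = n := by omega
      rw [he] at this
      omega

lemma key_formula (d : ℕ) (a b : ℕ → ℝ)
    (h : ∑ i ∈ Finset.range (d + 1), Polynomial.C (a i) * Polynomial.X ^ i =
        ∑ i ∈ Finset.range (d / 2 + 1),
          Polynomial.C (b i) * Polynomial.X ^ i * (1 + Polynomial.X) ^ (d - 2 * i)) :
    ∀ i ≤ d, a i = ∑ j ∈ Finset.range (d/2 + 1),
      b j * (if j ≤ i then ((d - 2*j).choose (i - j) : ℝ) else 0) := by
  intro i hi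
  have hthis := congrArg (fun p => Polynomial.coeff p i) h
  simp only [finset_sum_coeff] at hthis
  have hL : ∑ k ∈ Finset.range (d+1), (C (a k) * X ^ k).coeff i = a i := by
    rw [Finset.sum_congr rfl (fun k _ => by rw [coeff_C_mul, coeff_X_pow])]
    rw [Finset.sum_eq_single i (fun k _ hk => by simp [Ne.symm hk])
      (by intro hh; exact absurd (Finset.mem_range.mpr (by omega)) hh)]
    simp
  have hR : ∀ j, (C (b j) * X ^ j * (1+X)^(d-2*j)).coeff i
      = b j * (if j ≤ i then ((d - 2*j).choose (i - j) : ℝ) else 0) := by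
    intro j
    rw [show C (b j) * X ^ j * (1+X)^(d-2*j) = C (b j) * ((1+X)^(d-2*j) * X ^ j) by ring,
      coeff_C_mul, coeff_mul_X_pow']
    split <;> simp [coeff_one_add_X_pow]
  rw [hL, Finset.sum_congr rfl (fun j _ => hR j)] at hthis
  exact hthis


/-- if `p(t) = Σ_{i=0}^d a_i t^i` with nonnegative coefficients has an
expansion `p(t) = Σ_{i=0}^{⌊d/2⌋} b_i t^i (1+t)^{d-2i}` with all `b_i ≥ 0`, then the
sequence `a_0, …, a_d` is symmetric and unimodal. -/
theorem gamma_nonneg_implies_symmetric_unimodal (d : ℕ) (a b : ℕ → ℝ)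
    (ha : ∀ i, 0 ≤ a i) (hb : ∀ i, 0 ≤ b i)
    (h : ∑ i ∈ Finset.range (d + 1), Polynomial.C (a i) * Polynomial.X ^ i =
        ∑ i ∈ Finset.range (d / 2 + 1),
          Polynomial.C (b i) * Polynomial.X ^ i * (1 + Polynomial.X) ^ (d - 2 * i)) :
    (∀ i ≤ d, a i = a (d - i)) ∧
    ∃ c ≤ d, (∀ i j, i ≤ j → j ≤ c → a i ≤ a j) ∧
      (∀ i j, c ≤ i → i ≤ j → j ≤ d → a j ≤ a i) := by
  have key := key_formula d a b h
  have hsym : ∀ i ≤ d, a i = a (d - i) := by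
    intro i hi
    rw [key i hi, key (d - i) (by omega)]
    refine Finset.sum_congr rfl (fun j hj => ?_)
    have hj2 : 2 * j ≤ d := by
      have := Finset.mem_range.mp hj; omega
    congr 1
    by_cases h1 : j ≤ i <;> by_cases h2 : j ≤ d - i
    · rw [if_pos h1, if_pos h2]
      have : d - i - j = (d - 2*j) - (i - j) := by omega
      rw [this, Nat.choose_symm (by omega)]
    · rw [if_pos h1, if_neg h2, Nat.choose_eq_zero_of_lt (by omega)]
      norm_num
    · rw [if_neg h1, if_pos h2, Nat.choose_eq_zero_of_lt (by omega)]
      norm_num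
    · rw [if_neg h1, if_neg h2]
  have hmono : ∀ i i', i ≤ i' → i' ≤ (d+1)/2 → a i ≤ a i' := by
    intro i i' hii hi'
    rw [key i (by omega), key i' (by omega)]
    refine Finset.sum_le_sum (fun j hj => ?_)
    have hj2 : 2 * j ≤ d := by
      have := Finset.mem_range.mp hj; omega
    by_cases h1 : j ≤ i
    · rw [if_pos h1, if_pos (h1.trans hii)]
      refine mul_le_mul_of_nonneg_left ?_ (hb j)
      exact_mod_cast choose_mono_half (d - 2*j) (by omega) (by omega)
    · rw [if_neg h1]
      by_cases h2 : j ≤ i'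
      · rw [if_pos h2]
        rw [mul_zero]; exact mul_nonneg (hb j) (Nat.cast_nonneg _)
      · rw [if_neg h2]
  refine ⟨hsym, d/2, by omega, fun i j hij hj => hmono i j hij (by omega), fun i j hci hij hjd => ?_⟩
  rw [hsym i (by omega), hsym j hjd]
  exact hmono (d - j) (d - i) (by omega) (by omega)


end FS
end

section
/- For each x ∈ [n], the map φ_x : S_n → S_n defined via the x-factorization is an involution: φ_x(φ_x(π)) = π for all π ∈ S_n. -/
namespace FS

/-- The Foata–Strehl involution `φ_x`: writing `l = w₁ w₂ x w₄ w₅` where `w₂` (resp. `w₄`)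
is the maximal contiguous subword immediately to the left (resp. right) of `x` all of whose
letters are smaller than `x`, we set `φ_x(l) = w₁ w₄ x w₂ w₅`. -/
def phi (x : ℕ) (l : List ℕ) : List ℕ :=
  if x ∈ l then
    let L := l.takeWhile (fun y => y != x)
    let R := (l.dropWhile (fun y => y != x)).tail
    let w1 := (L.reverse.dropWhile (fun y => decide (y < x))).reverse
    let w2 := (L.reverse.takeWhile (fun y => decide (y < x))).reverse
    let w4 := R.takeWhile (fun y => decide (y < x))
    let w5 := R.dropWhile (fun y => decide (y < x))
    w1 ++ w4 ++ x :: (w2 ++ w5)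
  else l

/-- The (1-indexed) position of the letter `x` in `l`. -/
def posIdx (l : List ℕ) (x : ℕ) : ℕ := l.idxOf x + 1

/-- `x` is a double ascent of `l` (boundary convention `a_0 = a_{n+1} = n+1`). -/
def isDA (n : ℕ) (l : List ℕ) (x : ℕ) : Bool :=
  l.contains x && decide (wordext n l (posIdx l x - 1) < x)
    && decide (x < wordext n l (posIdx l x + 1))

/-- `x` is a double descent of `l` (boundary convention `a_0 = a_{n+1} = n+1`). -/
def isDD (n : ℕ) (l : List ℕ) (x : ℕ) : Bool :=
  l.contains x && decide (x < wordext n l (posIdx l x - 1))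
    && decide (wordext n l (posIdx l x + 1) < x)

/-- The modified Foata–Strehl involution `φ'_x`. -/
def phi' (n x : ℕ) (l : List ℕ) : List ℕ :=
  if isDA n l x || isDD n l x then phi x l else l


lemma head?_dropWhile (p : ℕ → Bool) (l : List ℕ) :
    ∀ b ∈ (l.dropWhile p).head?, p b = false := by
  induction l with
  | nil => simp
  | cons a l ih =>
      intro b hb
      rw [List.dropWhile_cons] at hb
      split at hb
      · exact ih b hb
      · simp_all

lemma takeWhile_append_eq (p : ℕ → Bool) (A B : List ℕ) (hA : ∀ a ∈ A, p a = true)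
    (hB : ∀ b ∈ B.head?, p b = false) : (A ++ B).takeWhile p = A := by
  induction A with
  | nil =>
      cases B with
      | nil => simp
      | cons b B => simp [List.takeWhile_cons, hB b (by simp)]
  | cons a A ih =>
      simp only [List.cons_append, List.takeWhile_cons, hA a (by simp)]
      simp [ih (fun a ha => hA a (by simp [ha]))]

lemma dropWhile_append_eq (p : ℕ → Bool) (A B : List ℕ) (hA : ∀ a ∈ A, p a = true)
    (hB : ∀ b ∈ B.head?, p b = false) : (A ++ B).dropWhile p = B := by
  induction A with
  | nil =>
      cases B with
      | nil => simp
      | cons b B => simp [List.dropWhile_cons, hB b (by simp)]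
  | cons a A ih =>
      simp only [List.cons_append, List.dropWhile_cons, hA a (by simp)]
      simp [ih (fun a ha => hA a (by simp [ha]))]

lemma phi_eq (x : ℕ) (w1 w2 w4 w5 : List ℕ)
    (h1 : ∀ b ∈ w1.reverse.head?, decide (b < x) = false)
    (h2 : ∀ a ∈ w2, a < x)
    (hx1 : x ∉ w1) (hx2 : x ∉ w2)
    (h4 : ∀ a ∈ w4, a < x)
    (h5 : ∀ b ∈ w5.head?, decide (b < x) = false) :
    phi x (w1 ++ w2 ++ (x :: (w4 ++ w5))) = w1 ++ w4 ++ (x :: (w2 ++ w5)) := by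
  have hxmem : x ∈ w1 ++ w2 ++ (x :: (w4 ++ w5)) := by simp
  rw [phi, if_pos hxmem]
  have hne : ∀ a ∈ w1 ++ w2, (a != x) = true := by
    intro a ha
    rw [List.mem_append] at ha
    rcases ha with h | h
    · exact bne_iff_ne.mpr (fun e => hx1 (e ▸ h))
    · exact bne_iff_ne.mpr (fun e => hx2 (e ▸ h))
  have hL : (w1 ++ w2 ++ (x :: (w4 ++ w5))).takeWhile (fun y => y != x) = w1 ++ w2 :=
    takeWhile_append_eq _ _ _ hne (by simp)
  have hR : (w1 ++ w2 ++ (x :: (w4 ++ w5))).dropWhile (fun y => y != x) = x :: (w4 ++ w5) :=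
    dropWhile_append_eq _ _ _ hne (by simp)
  simp only [hL, hR, List.tail_cons]
  have hrev : (w1 ++ w2).reverse = w2.reverse ++ w1.reverse := by simp
  have h2' : ∀ a ∈ w2.reverse, (decide (a < x)) = true := by
    intro a ha; rw [List.mem_reverse] at ha; exact decide_eq_true (h2 a ha)
  have htw : (w2.reverse ++ w1.reverse).takeWhile (fun y => decide (y < x)) = w2.reverse :=
    takeWhile_append_eq _ _ _ h2' h1
  have hdw : (w2.reverse ++ w1.reverse).dropWhile (fun y => decide (y < x)) = w1.reverse :=
    dropWhile_append_eq _ _ _ h2' h1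
  have h4' : ∀ a ∈ w4, (decide (a < x)) = true := fun a ha => decide_eq_true (h4 a ha)
  have htw4 : (w4 ++ w5).takeWhile (fun y => decide (y < x)) = w4 :=
    takeWhile_append_eq _ _ _ h4' h5
  have hdw4 : (w4 ++ w5).dropWhile (fun y => decide (y < x)) = w5 :=
    dropWhile_append_eq _ _ _ h4' h5
  simp [hrev, htw, hdw, htw4, hdw4]

/-- each `φ_x` is an involution on `S_n`. -/
theorem phi_involution (n x : ℕ) (l : List ℕ) (hx : x ∈ Finset.Icc 1 n)
    (hl : l.Perm (List.range' 1 n)) :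
    phi x (phi x l) = l := by
  have hnd : l.Nodup := hl.nodup_iff.mpr (List.nodup_range' (s := 1) (n := n))
  have hxl : x ∈ l := by
    rw [hl.mem_iff, List.mem_range'_1]
    rw [Finset.mem_Icc] at hx
    omega
  set p : ℕ → Bool := fun y => y != x with hp
  set q : ℕ → Bool := fun y => decide (y < x) with hq
  set L := l.takeWhile p with hLdef
  set R := (l.dropWhile p).tail with hRdef
  -- dropWhile p l = x :: R
  have hdne : l.dropWhile p ≠ [] := by
    intro h
    have := List.takeWhile_append_dropWhile (p := p) (l := l)
    rw [h, List.append_nil] at this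
    rw [← this] at hxl
    have := List.mem_takeWhile_imp hxl
    simp [hp] at this
  obtain ⟨h0, T, hT⟩ := List.exists_cons_of_ne_nil hdne
  have hh0 : h0 = x := by
    have := head?_dropWhile p l h0 (by rw [hT]; rfl)
    simpa [hp] using this
  have hdrop : l.dropWhile p = x :: R := by
    rw [hRdef, hT, hh0]; rfl
  have hsplit : l = L ++ (x :: R) := by
    conv_lhs => rw [← List.takeWhile_append_dropWhile (p := p) (l := l)]
    rw [hdrop]
  -- pieces
  set w1 := (L.reverse.dropWhile q).reverse with hw1
  set w2 := (L.reverse.takeWhile q).reverse with hw2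
  set w4 := R.takeWhile q with hw4
  set w5 := R.dropWhile q with hw5
  have hLsplit : L = w1 ++ w2 := by
    rw [hw1, hw2, ← List.reverse_append, List.takeWhile_append_dropWhile, List.reverse_reverse]
  have hRsplit : R = w4 ++ w5 := (List.takeWhile_append_dropWhile (p := q) (l := R)).symm
  have hxL : x ∉ L := fun h => by simpa [hp] using List.mem_takeWhile_imp h
  have hxR : x ∉ R := by
    rw [hsplit] at hnd
    exact (List.nodup_cons.mp (List.nodup_append.mp hnd).2.1).1
  have h1 : ∀ b ∈ w1.reverse.head?, q b = false := by
    rw [hw1, List.reverse_reverse]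
    exact head?_dropWhile q L.reverse
  have h2 : ∀ a ∈ w2, a < x := by
    intro a ha
    rw [hw2, List.mem_reverse] at ha
    have := List.mem_takeWhile_imp ha
    simpa [hq] using this
  have h4 : ∀ a ∈ w4, a < x := by
    intro a ha
    rw [hw4] at ha
    have := List.mem_takeWhile_imp ha
    simpa [hq] using this
  have h5 : ∀ b ∈ w5.head?, q b = false := by
    rw [hw5]; exact head?_dropWhile q R
  have hx1 : x ∉ w1 := fun h => hxL (hLsplit ▸ List.mem_append_left w2 h)
  have hx2 : x ∉ w2 := fun h => hxL (hLsplit ▸ List.mem_append_right w1 h)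
  have hx4 : x ∉ w4 := fun h => hxR (hRsplit ▸ List.mem_append_left w5 h)
  have e1 : phi x l = w1 ++ w4 ++ (x :: (w2 ++ w5)) := by
    conv_lhs => rw [hsplit, hLsplit, hRsplit]
    exact phi_eq x w1 w2 w4 w5 h1 h2 hx1 hx2 h4 h5
  rw [e1, phi_eq x w1 w4 w2 w5 h1 h4 hx1 hx4 h2 h5, ← hRsplit, ← hLsplit, ← hsplit]


end FS
end

section
/- The map f : S_n → S_n defined by f = φ'_{[n]} (applying the modified Foata–Strehl involution φ'_x for every x ∈ [n]) satisfies des(f(π)) + des(π) = n - 1 for all π ∈ S_n. -/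
namespace FS

/-- The map `f = φ'_{[n]}`, applying the modified Foata–Strehl involution `φ'_x` for
every `x ∈ [n]` (the `φ'_x` commute, so the order is irrelevant). -/
def fsAll (n : ℕ) (l : List ℕ) : List ℕ := (List.range' 1 n).foldl (fun w x => phi' n x w) l

open List


lemma getLastD_append (p q : List ℕ) (d : ℕ) : (p ++ q).getLastD d = q.getLastD (p.getLastD d) := by
  induction p generalizing d with
  | nil => cases q <;> simp
  | cons a p ih => simp only [cons_append, getLastD_cons, ih]

lemma headD_append (p q : List ℕ) (d : ℕ) : (p ++ q).headD d = p.headD (q.headD d) := by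
  cases p <;> simp

lemma getD_cons_length (a : ℕ) (p : List ℕ) : (a :: p).getD p.length 0 = p.getLastD a := by
  induction p generalizing a with
  | nil => rfl
  | cons b t ih =>
    simp only [length_cons, List.getD_cons_succ, getLastD_cons]
    exact ih b

lemma getLastD_mem (p : List ℕ) (d : ℕ) (h : p ≠ []) : p.getLastD d ∈ p := by
  induction p generalizing d with
  | nil => exact absurd rfl h
  | cons a t ih =>
    rcases eq_or_ne t [] with rfl | ht
    · simp
    · simp only [getLastD_cons]
      exact mem_cons_of_mem _ (ih a ht)

lemma headD_mem (p : List ℕ) (d : ℕ) (h : p ≠ []) : p.headD d ∈ p := by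
  cases p with
  | nil => exact absurd rfl h
  | cons a t => simp

lemma getLastD_reverse (l : List ℕ) (d : ℕ) : l.reverse.getLastD d = l.headD d := by
  cases l with
  | nil => rfl
  | cons a t => simp [reverse_cons, getLastD_append]

lemma headD_reverse (l : List ℕ) (d : ℕ) : l.reverse.headD d = l.getLastD d := by
  rw [← getLastD_reverse l.reverse d, reverse_reverse]

/- wordext at decomposition -/
lemma wordext_left (n : ℕ) (p q : List ℕ) (y : ℕ) :
    wordext n (p ++ y :: q) p.length = p.getLastD (n + 1) := by
  show (((n+1) :: (p ++ y :: q ++ [n+1]))).getD p.length 0 = _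
  have h : ((n+1) :: (p ++ y :: q ++ [n+1])) = ((n+1) :: p) ++ (y :: q ++ [n+1]) := by simp
  rw [h, getD_append _ _ _ _ (by simp), getD_cons_length]

lemma wordext_mid (n : ℕ) (p q : List ℕ) (y : ℕ) :
    wordext n (p ++ y :: q) (p.length + 1) = y := by
  show (((n+1) :: (p ++ y :: q ++ [n+1]))).getD (p.length + 1) 0 = _
  have h : ((n+1) :: (p ++ y :: q ++ [n+1])) = ((n+1) :: p) ++ (y :: q ++ [n+1]) := by simp
  rw [h, getD_append_right _ _ _ _ (by simp)]
  simp

lemma wordext_right (n : ℕ) (p q : List ℕ) (y : ℕ) :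
    wordext n (p ++ y :: q) (p.length + 2) = q.headD (n + 1) := by
  show (((n+1) :: (p ++ y :: q ++ [n+1]))).getD (p.length + 2) 0 = _
  have h : ((n+1) :: (p ++ y :: q ++ [n+1])) = ((n+1) :: p ++ [y]) ++ (q ++ [n+1]) := by simp
  rw [h, getD_append_right _ _ _ _ (by simp)]
  have : p.length + 2 - ((n+1) :: p ++ [y]).length = 0 := by simp
  rw [this]
  cases q <;> simp

lemma indexOf_append_cons (p q : List ℕ) (y : ℕ) (hy : y ∉ p) :
    (p ++ y :: q).idxOf y = p.length := by
  induction p with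
  | nil => simp
  | cons a t ih =>
    have ha : a ≠ y := by rintro rfl; exact hy mem_cons_self
    have : y ∉ t := fun h => hy (mem_cons_of_mem _ h)
    simp [List.idxOf_cons, ha, ih this]

lemma isDA_decomp (n y : ℕ) (p q : List ℕ) (hy : y ∉ p) :
    isDA n (p ++ y :: q) y =
      (decide (p.getLastD (n + 1) < y) && decide (y < q.headD (n + 1))) := by
  have hmem : y ∈ p ++ y :: q := by simp
  have hidx : (p ++ y :: q).idxOf y = p.length := indexOf_append_cons p q y hy
  have hc : (p ++ y :: q).contains y = true := by simp
  simp only [isDA, posIdx, hidx, hc, Nat.add_sub_cancel, wordext_left, Bool.true_and]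
  rw [show p.length + 1 + 1 = p.length + 2 from rfl, wordext_right]

lemma isDD_decomp (n y : ℕ) (p q : List ℕ) (hy : y ∉ p) :
    isDD n (p ++ y :: q) y =
      (decide (y < p.getLastD (n + 1)) && decide (q.headD (n + 1) < y)) := by
  have hmem : y ∈ p ++ y :: q := by simp
  have hidx : (p ++ y :: q).idxOf y = p.length := indexOf_append_cons p q y hy
  have hc : (p ++ y :: q).contains y = true := by simp
  simp only [isDD, posIdx, hidx, hc, Nat.add_sub_cancel, wordext_left, Bool.true_and]
  rw [show p.length + 1 + 1 = p.length + 2 from rfl, wordext_right]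

lemma isDA_notmem (n y : ℕ) (l : List ℕ) (hy : y ∉ l) : isDA n l y = false := by
  simp [isDA, hy]

lemma isDD_notmem (n y : ℕ) (l : List ℕ) (hy : y ∉ l) : isDD n l y = false := by
  simp [isDD, hy]


lemma getLastD_indep (c : ℕ) (t : List ℕ) (a b : ℕ) :
    (c :: t).getLastD a = (c :: t).getLastD b := by rw [getLastD_cons, getLastD_cons]


lemma compare_pair (n y : ℕ) (p q p' q' : List ℕ) (hyp : y ∉ p) (hyp' : y ∉ p')
    (h1 : p.getLastD (n+1) < y ↔ p'.getLastD (n+1) < y)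
    (h2 : y < p.getLastD (n+1) ↔ y < p'.getLastD (n+1))
    (h3 : y < q.headD (n+1) ↔ y < q'.headD (n+1))
    (h4 : q.headD (n+1) < y ↔ q'.headD (n+1) < y) :
    isDA n (p ++ y :: q) y = isDA n (p' ++ y :: q') y ∧
      isDD n (p ++ y :: q) y = isDD n (p' ++ y :: q') y := by
  rw [isDA_decomp n y p q hyp, isDA_decomp n y p' q' hyp',
    isDD_decomp n y p q hyp, isDD_decomp n y p' q' hyp']
  constructor <;> congr 1
  · exact decide_eq_decide.2 h1
  · exact decide_eq_decide.2 h3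
  · exact decide_eq_decide.2 h2
  · exact decide_eq_decide.2 h4

lemma core_transport {n x : ℕ} {A w B : List ℕ} (hw : w ≠ []) (hwlt : ∀ z ∈ w, z < x)
    (hA : x < A.getLastD (n+1)) (hB : x < B.headD (n+1))
    (hnd : (A ++ (w ++ x :: B)).Nodup) :
    ∀ y, y ≠ x →
      isDA n (A ++ (x :: (w ++ B))) y = isDA n (A ++ (w ++ x :: B)) y ∧
      isDD n (A ++ (x :: (w ++ B))) y = isDD n (A ++ (w ++ x :: B)) y := by
  intro y hyx
  have hnd' := hnd
  rw [List.nodup_append] at hnd'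
  obtain ⟨hndA, hndwB, hdisA⟩ := hnd'
  rw [List.nodup_append] at hndwB
  obtain ⟨hndw, hndxB, hdisw⟩ := hndwB
  rw [List.nodup_cons] at hndxB
  obtain ⟨hxB, hndB⟩ := hndxB
  by_cases hyU : y ∈ A ++ (w ++ x :: B)
  case neg =>
    have hyV : y ∉ A ++ (x :: (w ++ B)) := by
      simp only [mem_append, mem_cons] at hyU ⊢; tauto
    rw [isDA_notmem n y _ hyU, isDA_notmem n y _ hyV,
      isDD_notmem n y _ hyU, isDD_notmem n y _ hyV]
    exact ⟨rfl, rfl⟩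
  simp only [mem_append, mem_cons] at hyU
  rcases hyU with hyA | hyw | rfl | hyB
  · -- y ∈ A
    obtain ⟨p, t, rfl⟩ := List.append_of_mem hyA
    have hyp : y ∉ p := by
      have h2 := hndA
      rw [List.nodup_middle, List.nodup_cons] at h2
      exact fun h => h2.1 (mem_append.2 (Or.inl h))
    have eU : (p ++ y :: t) ++ (w ++ x :: B) = p ++ y :: (t ++ (w ++ x :: B)) := by simp
    have eV : (p ++ y :: t) ++ (x :: (w ++ B)) = p ++ y :: (t ++ (x :: (w ++ B))) := by simp
    rw [eU, eV]
    obtain ⟨c, w', rfl⟩ := List.exists_cons_of_ne_nil hw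
    have hcx : c < x := hwlt c mem_cons_self
    refine compare_pair n y p _ p _ hyp hyp Iff.rfl Iff.rfl ?_ ?_ <;>
    · rw [headD_append, headD_append]
      cases t with
      | cons d t' => simp [headD_cons]
      | nil =>
        have hxy : x < y := by
          have h3 := hA
          rwa [getLastD_append, getLastD_cons, getLastD_nil] at h3
        simp only [nil_append, headD_cons, cons_append, headD_nil]
        omega
  · -- y ∈ w
    obtain ⟨p', t', rfl⟩ := List.append_of_mem hyw
    have hyp' : y ∉ p' := by
      have h2 := hndw
      rw [List.nodup_middle, List.nodup_cons] at h2
      exact fun h => h2.1 (mem_append.2 (Or.inl h))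
    have hyA' : y ∉ A := fun h => hdisA y h y (by simp) rfl
    have hylt : y < x := hwlt y hyw
    have eU : A ++ ((p' ++ y :: t') ++ x :: B) = (A ++ p') ++ y :: (t' ++ x :: B) := by simp
    have eV : A ++ (x :: ((p' ++ y :: t') ++ B)) = (A ++ x :: p') ++ y :: (t' ++ B) := by simp
    rw [eU, eV]
    have hyAxp : y ∉ A ++ x :: p' := by simp [hyA', hyp', hyx]
    have hyAp : y ∉ A ++ p' := by simp [hyA', hyp']
    have hlast : (A ++ x :: p').getLastD (n+1) = (A ++ p').getLastD (n+1) ∨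
        ((A ++ x :: p').getLastD (n+1) = x ∧ x < (A ++ p').getLastD (n+1)) := by
      rw [getLastD_append, getLastD_append, getLastD_cons]
      cases p' with
      | cons c t'' => exact Or.inl (getLastD_indep c t'' x (A.getLastD (n+1)))
      | nil => exact Or.inr ⟨rfl, hA⟩
    have hhead : (t' ++ B).headD (n+1) = (t' ++ x :: B).headD (n+1) ∨
        ((t' ++ x :: B).headD (n+1) = x ∧ x < (t' ++ B).headD (n+1)) := by
      rw [headD_append, headD_append]
      cases t' with
      | cons d t'' => exact Or.inl rfl
      | nil => exact Or.inr ⟨rfl, hB⟩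
    refine compare_pair n y _ _ _ _ hyAxp hyAp ?_ ?_ ?_ ?_ <;>
      rcases hlast with he | ⟨he1, he2⟩ <;> rcases hhead with hf | ⟨hf1, hf2⟩ <;> omega
  · exact absurd rfl hyx
  · -- y ∈ B
    obtain ⟨p'', t'', rfl⟩ := List.append_of_mem hyB
    have hyp'' : y ∉ p'' := by
      have h2 := hndB
      rw [List.nodup_middle, List.nodup_cons] at h2
      exact fun h => h2.1 (mem_append.2 (Or.inl h))
    have hyA' : y ∉ A := fun h => hdisA y h y (by simp) rfl
    have hyw' : y ∉ w := fun h => hdisw y h y (by simp) rfl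
    have eU : A ++ (w ++ x :: (p'' ++ y :: t'')) = (A ++ (w ++ x :: p'')) ++ y :: t'' := by simp
    have eV : A ++ (x :: (w ++ (p'' ++ y :: t''))) = (A ++ (x :: (w ++ p''))) ++ y :: t'' := by simp
    rw [eU, eV]
    have h1 : y ∉ A ++ (x :: (w ++ p'')) := by simp [hyA', hyw', hyp'', hyx]
    have h2 : y ∉ A ++ (w ++ x :: p'') := by simp [hyA', hyw', hyp'', hyx]
    have hwx : w.getLastD x < x := hwlt _ (getLastD_mem w x hw)
    have hlast : (A ++ (x :: (w ++ p''))).getLastD (n+1) = (A ++ (w ++ x :: p'')).getLastD (n+1) ∨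
        ((A ++ (x :: (w ++ p''))).getLastD (n+1) < x ∧ (A ++ (w ++ x :: p'')).getLastD (n+1) = x
          ∧ x < y) := by
      rw [getLastD_append, getLastD_append, getLastD_cons, getLastD_append, getLastD_append,
        getLastD_cons]
      cases p'' with
      | cons c t3 => exact Or.inl (getLastD_indep c t3 (w.getLastD x) x)
      | nil => exact Or.inr ⟨hwx, rfl, hB⟩
    refine compare_pair n y _ _ _ _ h1 h2 ?_ ?_ Iff.rfl Iff.rfl <;>
      rcases hlast with he | ⟨he1, he2, he3⟩ <;> omega

lemma core_x {n x : ℕ} {A w B : List ℕ} (hw : w ≠ []) (hwlt : ∀ z ∈ w, z < x)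
    (hA : x < A.getLastD (n+1)) (hB : x < B.headD (n+1))
    (hnd : (A ++ (w ++ x :: B)).Nodup) :
    isDA n (A ++ (w ++ x :: B)) x = true ∧ isDD n (A ++ (w ++ x :: B)) x = false ∧
    isDA n (A ++ (x :: (w ++ B))) x = false ∧ isDD n (A ++ (x :: (w ++ B))) x = true := by
  have hU : A ++ (w ++ x :: B) = (A ++ w) ++ x :: B := by simp
  have hxAw : x ∉ A ++ w := by
    have h := hnd
    rw [hU, List.nodup_middle, List.nodup_cons] at h
    exact fun hc => h.1 (by rcases mem_append.1 hc with h' | h' <;> simp [h'])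
  have hxA : x ∉ A := fun hc => hxAw (mem_append.2 (Or.inl hc))
  have hlastU : (A ++ w).getLastD (n+1) < x := by
    rw [getLastD_append]
    exact hwlt _ (getLastD_mem w _ hw)
  have hheadV : (w ++ B).headD (n+1) < x := by
    rw [headD_append]
    exact hwlt _ (headD_mem w _ hw)
  refine ⟨?_, ?_, ?_, ?_⟩
  · rw [hU, isDA_decomp n x _ _ hxAw]
    simp only [Bool.and_eq_true, decide_eq_true_eq]
    exact ⟨hlastU, hB⟩
  · rw [hU, isDD_decomp n x _ _ hxAw]
    simp only [Bool.and_eq_false_iff, decide_eq_false_iff_not, not_lt]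
    exact Or.inl (le_of_lt hlastU)
  · rw [isDA_decomp n x _ _ hxA]
    simp only [Bool.and_eq_false_iff, decide_eq_false_iff_not, not_lt]
    exact Or.inl (le_of_lt hA)
  · rw [isDD_decomp n x _ _ hxA]
    simp only [Bool.and_eq_true, decide_eq_true_eq]
    exact ⟨hA, hheadV⟩

lemma isDA_mem {n x : ℕ} {l : List ℕ} (hda : isDA n l x = true) : x ∈ l := by
  by_contra hc
  rw [isDA_notmem n x l hc] at hda
  exact Bool.false_ne_true hda

lemma isDD_mem {n x : ℕ} {l : List ℕ} (hdd : isDD n l x = true) : x ∈ l := by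
  by_contra hc
  rw [isDD_notmem n x l hc] at hdd
  exact Bool.false_ne_true hdd

lemma takeDrop_setup (x : ℕ) (l : List ℕ) (hxl : x ∈ l) :
    l = l.takeWhile (fun y => y != x) ++ x :: (l.dropWhile (fun y => y != x)).tail ∧
    x ∉ l.takeWhile (fun y => y != x) := by
  have hDne : l.dropWhile (fun y => y != x) ≠ [] := by
    intro hc
    rw [dropWhile_eq_nil_iff] at hc
    have := hc x hxl
    simp at this
  constructor
  · conv_lhs => rw [← takeWhile_append_dropWhile (p := fun y => y != x) (l := l)]
    congr 1
    rw [← List.cons_head_tail hDne]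
    congr 1
    have h2 := head_dropWhile_not (fun y => y != x) hDne
    simpa using h2
  · intro hc
    have := mem_takeWhile_imp hc
    simp at this

lemma dropWhile_cons_prop (p : ℕ → Bool) (l : List ℕ) (e : ℕ) (T : List ℕ)
    (h : l.dropWhile p = e :: T) : p e = false ∧ e ∈ l := by
  have hne : l.dropWhile p ≠ [] := by rw [h]; simp
  have h1 := head_dropWhile_not p hne
  simp only [h, List.head_cons] at h1
  refine ⟨h1, ?_⟩
  have : e ∈ l.dropWhile p := by rw [h]; simp
  exact (List.dropWhile_sublist p (l := l)).mem this

lemma da_splits (n x : ℕ) (l : List ℕ) (hx : x < n + 1) (hnd : l.Nodup)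
    (hda : isDA n l x = true) :
    ∃ A w B : List ℕ, l = A ++ (w ++ x :: B) ∧ phi x l = A ++ (x :: (w ++ B)) ∧
      w ≠ [] ∧ (∀ z ∈ w, z < x) ∧ x < A.getLastD (n+1) ∧ x < B.headD (n+1) := by
  have hxl : x ∈ l := isDA_mem hda
  obtain ⟨hl2, hxL⟩ := takeDrop_setup x l hxl
  rw [hl2, isDA_decomp n x _ _ hxL] at hda
  simp only [Bool.and_eq_true, decide_eq_true_eq] at hda
  obtain ⟨h1, h2⟩ := hda
  have hw4 : ((l.dropWhile (fun y => y != x)).tail).takeWhile (fun y => decide (y < x)) = [] := by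
    cases hRe : (l.dropWhile (fun y => y != x)).tail with
    | nil => rfl
    | cons c R' =>
      rw [hRe, headD_cons] at h2
      rw [takeWhile_cons]
      simp [Nat.not_lt.2 (le_of_lt h2)]
  have hw5 : ((l.dropWhile (fun y => y != x)).tail).dropWhile (fun y => decide (y < x)) =
      (l.dropWhile (fun y => y != x)).tail := by
    cases hRe : (l.dropWhile (fun y => y != x)).tail with
    | nil => rfl
    | cons c R' =>
      rw [hRe, headD_cons] at h2
      rw [dropWhile_cons]
      simp [Nat.not_lt.2 (le_of_lt h2)]
  have hLne : l.takeWhile (fun y => y != x) ≠ [] := by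
    intro hc
    rw [hc, getLastD_nil] at h1
    omega
  have hLrne : (l.takeWhile (fun y => y != x)).reverse ≠ [] := by simpa using hLne
  have hw2ne : ((l.takeWhile (fun y => y != x)).reverse.takeWhile
      (fun y => decide (y < x))).reverse ≠ [] := by
    obtain ⟨d, T, hdT⟩ := List.exists_cons_of_ne_nil hLrne
    have hdx : d < x := by
      have hh : (l.takeWhile (fun y => y != x)).getLastD (n+1) = d := by
        rw [← headD_reverse, hdT, headD_cons]
      omega
    rw [hdT, takeWhile_cons]
    simp [hdx]
  have hw2lt : ∀ z ∈ ((l.takeWhile (fun y => y != x)).reverse.takeWhile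
      (fun y => decide (y < x))).reverse, z < x := by
    intro z hz
    rw [mem_reverse] at hz
    have := mem_takeWhile_imp hz
    simpa using this
  have hLsplit : l.takeWhile (fun y => y != x) =
      ((l.takeWhile (fun y => y != x)).reverse.dropWhile (fun y => decide (y < x))).reverse ++
      ((l.takeWhile (fun y => y != x)).reverse.takeWhile (fun y => decide (y < x))).reverse := by
    rw [← reverse_append, takeWhile_append_dropWhile, reverse_reverse]
  have hw1last : x < ((l.takeWhile (fun y => y != x)).reverse.dropWhile
      (fun y => decide (y < x))).reverse.getLastD (n+1) := by
    cases hdw : (l.takeWhile (fun y => y != x)).reverse.dropWhile (fun y => decide (y < x)) with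
    | nil => simpa using hx
    | cons e T' =>
      obtain ⟨h3, h4⟩ := dropWhile_cons_prop _ _ _ _ hdw
      simp only [decide_eq_false_iff_not, not_lt] at h3
      rw [mem_reverse] at h4
      have : e ≠ x := fun hc => hxL (hc ▸ h4)
      rw [getLastD_reverse, headD_cons]
      omega
  refine ⟨_, _, _, ?_, ?_, hw2ne, hw2lt, hw1last, h2⟩
  · conv_lhs => rw [hl2]
    conv_lhs => rw [hLsplit]
    simp
  · have hphi : phi x l =
        ((l.takeWhile (fun y => y != x)).reverse.dropWhile (fun y => decide (y < x))).reverse ++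
        ((l.dropWhile (fun y => y != x)).tail.takeWhile (fun y => decide (y < x))) ++
        x :: (((l.takeWhile (fun y => y != x)).reverse.takeWhile
            (fun y => decide (y < x))).reverse ++
          ((l.dropWhile (fun y => y != x)).tail.dropWhile (fun y => decide (y < x)))) := by
      simp only [phi, if_pos hxl]
    rw [hphi, hw4, hw5]
    simp

lemma dd_splits (n x : ℕ) (l : List ℕ) (hx : x < n + 1) (hnd : l.Nodup)
    (hdd : isDD n l x = true) :
    ∃ A w B : List ℕ, l = A ++ (x :: (w ++ B)) ∧ phi x l = A ++ (w ++ x :: B) ∧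
      w ≠ [] ∧ (∀ z ∈ w, z < x) ∧ x < A.getLastD (n+1) ∧ x < B.headD (n+1) := by
  have hxl : x ∈ l := isDD_mem hdd
  obtain ⟨hl2, hxL⟩ := takeDrop_setup x l hxl
  rw [hl2, isDD_decomp n x _ _ hxL] at hdd
  simp only [Bool.and_eq_true, decide_eq_true_eq] at hdd
  obtain ⟨h1, h2⟩ := hdd
  have hxR : x ∉ (l.dropWhile (fun y => y != x)).tail := by
    have h3 : l.Nodup := hnd
    rw [hl2, List.nodup_middle, List.nodup_cons] at h3
    exact fun hc => h3.1 (mem_append.2 (Or.inr hc))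
  have hw1L : (l.takeWhile (fun y => y != x)).reverse.dropWhile (fun y => decide (y < x)) =
      (l.takeWhile (fun y => y != x)).reverse := by
    cases hLr : (l.takeWhile (fun y => y != x)).reverse with
    | nil => rfl
    | cons d T =>
      have hd : (l.takeWhile (fun y => y != x)).getLastD (n+1) = d := by
        rw [← headD_reverse, hLr, headD_cons]
      rw [dropWhile_cons]
      simp [Nat.not_lt.2 (le_of_lt (hd ▸ h1))]
  have hw2L : (l.takeWhile (fun y => y != x)).reverse.takeWhile (fun y => decide (y < x)) = [] := by
    cases hLr : (l.takeWhile (fun y => y != x)).reverse with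
    | nil => rfl
    | cons d T =>
      have hd : (l.takeWhile (fun y => y != x)).getLastD (n+1) = d := by
        rw [← headD_reverse, hLr, headD_cons]
      rw [takeWhile_cons]
      simp [Nat.not_lt.2 (le_of_lt (hd ▸ h1))]
  have hRne : (l.dropWhile (fun y => y != x)).tail ≠ [] := by
    intro hc
    rw [hc, headD_nil] at h2
    omega
  have hw4ne : ((l.dropWhile (fun y => y != x)).tail.takeWhile (fun y => decide (y < x))) ≠ [] := by
    obtain ⟨c, R', hcR⟩ := List.exists_cons_of_ne_nil hRne
    have hcx : c < x := by
      rw [hcR, headD_cons] at h2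
      exact h2
    rw [hcR, takeWhile_cons]
    simp [hcx]
  have hw4lt : ∀ z ∈ (l.dropWhile (fun y => y != x)).tail.takeWhile (fun y => decide (y < x)),
      z < x := by
    intro z hz
    have := mem_takeWhile_imp hz
    simpa using this
  have hw5head : x < ((l.dropWhile (fun y => y != x)).tail.dropWhile
      (fun y => decide (y < x))).headD (n+1) := by
    cases hdw : (l.dropWhile (fun y => y != x)).tail.dropWhile (fun y => decide (y < x)) with
    | nil => simpa using hx
    | cons e T' =>
      obtain ⟨h3, h4⟩ := dropWhile_cons_prop _ _ _ _ hdw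
      simp only [decide_eq_false_iff_not, not_lt] at h3
      have : e ≠ x := fun hc => hxR (hc ▸ h4)
      rw [headD_cons]
      omega
  refine ⟨_, _, _, ?_, ?_, hw4ne, hw4lt, h1, hw5head⟩
  · conv_lhs => rw [hl2]
    congr 1
    congr 1
    exact takeWhile_append_dropWhile.symm
  · have hphi : phi x l =
        ((l.takeWhile (fun y => y != x)).reverse.dropWhile (fun y => decide (y < x))).reverse ++
        ((l.dropWhile (fun y => y != x)).tail.takeWhile (fun y => decide (y < x))) ++
        x :: (((l.takeWhile (fun y => y != x)).reverse.takeWhile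
            (fun y => decide (y < x))).reverse ++
          ((l.dropWhile (fun y => y != x)).tail.dropWhile (fun y => decide (y < x)))) := by
      simp only [phi, if_pos hxl]
    rw [hphi, hw1L, hw2L]
    simp

lemma phi'_step (n x : ℕ) (l : List ℕ) (hx : x < n + 1) (hnd : l.Nodup) :
    (phi' n x l).Perm l ∧
    isDA n (phi' n x l) x = isDD n l x ∧ isDD n (phi' n x l) x = isDA n l x ∧
    ∀ y, y ≠ x → isDA n (phi' n x l) y = isDA n l y ∧ isDD n (phi' n x l) y = isDD n l y := by
  cases hda : isDA n l x with
  | true =>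
    have hphi' : phi' n x l = phi x l := by simp [phi', hda]
    obtain ⟨A, w, B, hU, hV, hw, hwlt, hA, hB⟩ := da_splits n x l hx hnd hda
    have hndU : (A ++ (w ++ x :: B)).Nodup := hU ▸ hnd
    obtain ⟨e1, e2, e3, e4⟩ := core_x hw hwlt hA hB hndU
    rw [hphi', hV]
    refine ⟨?_, ?_, ?_, ?_⟩
    · rw [hU]
      exact Perm.append_left A (perm_middle).symm
    · rw [e3]; rw [hU]; exact e2.symm
    · rw [e4]
    · intro y hy
      rw [hU]
      exact core_transport hw hwlt hA hB hndU y hy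
  | false =>
    cases hdd : isDD n l x with
    | true =>
      have hphi' : phi' n x l = phi x l := by simp [phi', hda, hdd]
      obtain ⟨A, w, B, hV, hU, hw, hwlt, hA, hB⟩ := dd_splits n x l hx hnd hdd
      have hndV : (A ++ (x :: (w ++ B))).Nodup := hV ▸ hnd
      have hndU : (A ++ (w ++ x :: B)).Nodup :=
        ((Perm.append_left A (perm_middle).symm).nodup_iff).1 hndV
      obtain ⟨e1, e2, e3, e4⟩ := core_x hw hwlt hA hB hndU
      rw [hphi', hU]
      refine ⟨?_, ?_, ?_, ?_⟩
      · rw [hV]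
        exact (Perm.append_left A (perm_middle).symm).symm
      · rw [e1]
      · rw [e2]
      · intro y hy
        rw [hV]
        obtain ⟨c1, c2⟩ := core_transport hw hwlt hA hB hndU y hy
        exact ⟨c1.symm, c2.symm⟩
    | false =>
      have hphi' : phi' n x l = l := by simp [phi', hda, hdd]
      rw [hphi']
      exact ⟨Perm.refl _, by simp [hda, hdd], by simp [hda, hdd],
        fun y _ => ⟨rfl, rfl⟩⟩

lemma fold_inv (n : ℕ) : ∀ (xs : List ℕ) (w : List ℕ), xs.Nodup → (∀ x ∈ xs, x < n + 1) →
    w.Nodup →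
    (xs.foldl (fun v x => phi' n x v) w).Perm w ∧
    (∀ y ∈ xs, isDA n (xs.foldl (fun v x => phi' n x v) w) y = isDD n w y ∧
        isDD n (xs.foldl (fun v x => phi' n x v) w) y = isDA n w y) ∧
    (∀ y, y ∉ xs → isDA n (xs.foldl (fun v x => phi' n x v) w) y = isDA n w y ∧
        isDD n (xs.foldl (fun v x => phi' n x v) w) y = isDD n w y) := by
  intro xs
  induction xs with
  | nil => exact fun w _ _ _ => ⟨Perm.refl w, fun y hy => absurd hy not_mem_nil,
      fun y _ => ⟨rfl, rfl⟩⟩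
  | cons x xs ih =>
    intro w hndxs hlt hndw
    rw [List.nodup_cons] at hndxs
    obtain ⟨hxxs, hndxs'⟩ := hndxs
    obtain ⟨sp, s2, s3, s4⟩ := phi'_step n x w (hlt x mem_cons_self) hndw
    have hndw' : (phi' n x w).Nodup := sp.symm.nodup hndw
    obtain ⟨ip, iswap, isame⟩ := ih (phi' n x w) hndxs'
      (fun z hz => hlt z (mem_cons_of_mem x hz)) hndw'
    have hfold : (x :: xs).foldl (fun v x => phi' n x v) w =
        xs.foldl (fun v x => phi' n x v) (phi' n x w) := rfl
    rw [hfold]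
    refine ⟨ip.trans sp, ?_, ?_⟩
    · intro y hy
      rcases mem_cons.1 hy with rfl | hy'
      · obtain ⟨c1, c2⟩ := isame y hxxs
        exact ⟨c1.trans s2, c2.trans s3⟩
      · have hyx : y ≠ x := fun hc => hxxs (hc ▸ hy')
        obtain ⟨c1, c2⟩ := iswap y hy'
        obtain ⟨d1, d2⟩ := s4 y hyx
        exact ⟨c1.trans d2, c2.trans d1⟩
    · intro y hy
      have hyx : y ≠ x := fun hc => hy (hc ▸ mem_cons_self)
      have hy' : y ∉ xs := fun hc => hy (mem_cons_of_mem x hc)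
      obtain ⟨c1, c2⟩ := isame y hy'
      obtain ⟨d1, d2⟩ := s4 y hyx
      exact ⟨c1.trans d1, c2.trans d2⟩

lemma Icc_succ_insert (N : ℕ) : Finset.Icc 1 (N+1) = insert (N+1) (Finset.Icc 1 N) := by
  ext k
  simp only [Finset.mem_Icc, Finset.mem_insert]
  omega

lemma card_filter_insert (P : ℕ → Prop) [DecidablePred P] (a : ℕ) (S : Finset ℕ) (ha : a ∉ S) :
    ((insert a S).filter P).card = (S.filter P).card + (if P a then 1 else 0) := by
  by_cases h : P a
  · rw [Finset.filter_insert, if_pos h, if_pos h,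
      Finset.card_insert_of_notMem (fun hc => ha (Finset.mem_of_mem_filter _ hc))]
  · rw [Finset.filter_insert, if_neg h, if_neg h]
    omega

lemma alt_count (s : ℕ → Bool) (N : ℕ) :
    ((Finset.Icc 1 N).filter (fun k => s (k-1) = false ∧ s k = true)).card
      + (if s 0 = true then 1 else 0)
    = ((Finset.Icc 1 N).filter (fun k => s (k-1) = true ∧ s k = false)).card
      + (if s N = true then 1 else 0) := by
  induction N with
  | zero => simp
  | succ N ih =>
    have hnm : (N+1) ∉ Finset.Icc 1 N := by simp
    rw [Icc_succ_insert, card_filter_insert _ _ _ hnm, card_filter_insert _ _ _ hnm]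
    have hsub : N + 1 - 1 = N := by omega
    rw [hsub]
    cases hN : s N <;> cases hN1 : s (N+1) <;>
      simp only [hN, hN1, Bool.true_eq_false, Bool.false_eq_true, and_true, and_false,
        and_self, ite_true, ite_false, if_true, if_false] at ih ⊢ <;> omega

lemma four_split (s : ℕ → Bool) (N : ℕ) :
    ((Finset.Icc 1 N).filter (fun k => s (k-1) = true ∧ s k = false)).card
    + ((Finset.Icc 1 N).filter (fun k => s (k-1) = false ∧ s k = true)).card
    + ((Finset.Icc 1 N).filter (fun k => s (k-1) = true ∧ s k = true)).card
    + ((Finset.Icc 1 N).filter (fun k => s (k-1) = false ∧ s k = false)).card = N := by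
  induction N with
  | zero => simp
  | succ N ih =>
    have hnm : (N+1) ∉ Finset.Icc 1 N := by simp
    rw [Icc_succ_insert, card_filter_insert _ _ _ hnm, card_filter_insert _ _ _ hnm,
      card_filter_insert _ _ _ hnm, card_filter_insert _ _ _ hnm]
    have hsub : N + 1 - 1 = N := by omega
    rw [hsub]
    cases hN : s N <;> cases hN1 : s (N+1) <;>
      simp only [hN, hN1, Bool.true_eq_false, Bool.false_eq_true, and_true, and_false,
        and_self, ite_true, ite_false, if_true, if_false] <;> omega

lemma des_split (s : ℕ → Bool) (N : ℕ) :
    ((Finset.Icc 1 N).filter (fun k => s k = false)).card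
    = ((Finset.Icc 1 N).filter (fun k => s (k-1) = true ∧ s k = false)).card
    + ((Finset.Icc 1 N).filter (fun k => s (k-1) = false ∧ s k = false)).card := by
  induction N with
  | zero => simp
  | succ N ih =>
    have hnm : (N+1) ∉ Finset.Icc 1 N := by simp
    rw [Icc_succ_insert, card_filter_insert _ _ _ hnm, card_filter_insert _ _ _ hnm,
      card_filter_insert _ _ _ hnm]
    have hsub : N + 1 - 1 = N := by omega
    rw [hsub]
    cases hN : s N <;> cases hN1 : s (N+1) <;>
      simp only [hN, hN1, Bool.true_eq_false, Bool.false_eq_true, and_true, and_false,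
        and_self, ite_true, ite_false, if_true, if_false] <;> omega

lemma filter_range_succ (Q : ℕ → Prop) [DecidablePred Q] (N : ℕ) :
    ((Finset.range (N+1)).filter Q).card
    = ((Finset.range N).filter (fun j => Q (j+1))).card + (if Q 0 then 1 else 0) := by
  rw [Finset.card_filter, Finset.card_filter, Finset.sum_range_succ']

lemma filter_range_last (Q : ℕ → Prop) [DecidablePred Q] (N : ℕ) (h : ¬ Q N) :
    ((Finset.range (N+1)).filter Q).card = ((Finset.range N).filter Q).card := by
  rw [Finset.range_add_one, Finset.filter_insert, if_neg h]

lemma filter_Icc_range (P : ℕ → Prop) [DecidablePred P] (N : ℕ) :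
    ((Finset.Icc 1 N).filter P).card = ((Finset.range N).filter (fun j => P (j+1))).card := by
  refine Finset.card_nbij' (fun k => k - 1) (fun j => j + 1) ?_ ?_ ?_ ?_
  · intro k hk
    simp only [Finset.mem_coe, Finset.mem_filter, Finset.mem_Icc, Finset.mem_range] at hk ⊢
    have : k - 1 + 1 = k := by omega
    rw [this]
    exact ⟨by omega, hk.2⟩
  · intro j hj
    simp only [Finset.mem_coe, Finset.mem_filter, Finset.mem_Icc, Finset.mem_range] at hj ⊢
    exact ⟨by omega, hj.2⟩
  · intro k hk
    simp only [Finset.mem_coe, Finset.mem_filter, Finset.mem_Icc] at hk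
    show k - 1 + 1 = k
    omega
  · intro j _
    show j + 1 - 1 = j
    omega

lemma wordext_zero (n : ℕ) (m : List ℕ) : wordext n m 0 = n + 1 := rfl

lemma wordext_succ (n : ℕ) (m : List ℕ) (j : ℕ) (hj : j < m.length) :
    wordext n m (j+1) = m.getD j 0 := by
  show ((n+1) :: (m ++ [n+1])).getD (j+1) 0 = m.getD j 0
  rw [List.getD_cons_succ, getD_append _ _ _ _ hj]

lemma wordext_top (n : ℕ) (m : List ℕ) (hlen : m.length = n) :
    wordext n m (n+1) = n + 1 := by
  show ((n+1) :: (m ++ [n+1])).getD (n+1) 0 = n + 1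
  rw [List.getD_cons_succ, getD_append_right _ _ _ _ (by omega : m.length ≤ n), hlen]
  simp

section PermFacts

variable {n : ℕ} {m : List ℕ}

lemma perm_facts (hm : m.Perm (List.range' 1 n)) :
    m.length = n ∧ m.Nodup ∧ ∀ z ∈ m, 1 ≤ z ∧ z ≤ n := by
  refine ⟨hm.length_eq.trans (by simp), hm.symm.nodup List.nodup_range', ?_⟩
  intro z hz
  have := hm.mem_iff.1 hz
  rw [mem_range'_1] at this
  omega

lemma wordext_get (hm : m.Perm (List.range' 1 n)) {k : ℕ} (h1 : 1 ≤ k) (h2 : k ≤ n) :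
    wordext n m k = m.get ⟨k-1, by rw [(perm_facts hm).1]; omega⟩ := by
  obtain ⟨hlen, -, -⟩ := perm_facts hm
  have hk : k - 1 < m.length := by omega
  have hke : k = (k-1) + 1 := by omega
  conv_lhs => rw [hke]
  rw [wordext_succ n m (k-1) hk, List.getD_eq_getElem _ _ hk]
  rfl

lemma wordext_mem (hm : m.Perm (List.range' 1 n)) {k : ℕ} (h1 : 1 ≤ k) (h2 : k ≤ n) :
    wordext n m k ∈ m := by
  rw [wordext_get hm h1 h2]
  exact List.get_mem m _

lemma wordext_bounds (hm : m.Perm (List.range' 1 n)) {k : ℕ} (h1 : 1 ≤ k) (h2 : k ≤ n) :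
    1 ≤ wordext n m k ∧ wordext n m k ≤ n :=
  (perm_facts hm).2.2 _ (wordext_mem hm h1 h2)

lemma wordext_adj_ne (hm : m.Perm (List.range' 1 n)) {k : ℕ} (h1 : 1 ≤ k) (h2 : k ≤ n) :
    wordext n m (k-1) ≠ wordext n m k ∧ wordext n m k ≠ wordext n m (k+1) := by
  obtain ⟨hlen, hnd, hbd⟩ := perm_facts hm
  have hk := wordext_bounds hm h1 h2
  constructor
  · rcases eq_or_lt_of_le h1 with h | h
    · subst h
      show wordext n m 0 ≠ _
      rw [wordext_zero]
      omega
    · have h1' : 1 ≤ k - 1 := by omega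
      have h2' : k - 1 ≤ n := by omega
      rw [wordext_get hm h1' h2', wordext_get hm h1 h2]
      intro hc
      have := (hnd.get_inj_iff).1 hc
      have := Fin.val_eq_val _ _ |>.2 this
      simp at this
      omega
  · rcases eq_or_lt_of_le h2 with h | h
    · rw [h] at hk ⊢
      rw [wordext_top n m hlen]
      omega
    · have h1' : 1 ≤ k + 1 := by omega
      have h2' : k + 1 ≤ n := by omega
      rw [wordext_get hm h1 h2, wordext_get hm h1' h2']
      intro hc
      have := (hnd.get_inj_iff).1 hc
      have := Fin.val_eq_val _ _ |>.2 this
      simp at this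
      omega

lemma posIdx_wordext (hm : m.Perm (List.range' 1 n)) {k : ℕ} (h1 : 1 ≤ k) (h2 : k ≤ n) :
    posIdx m (wordext n m k) = k := by
  obtain ⟨hlen, hnd, -⟩ := perm_facts hm
  rw [wordext_get hm h1 h2, posIdx, get_idxOf hnd]
  show k - 1 + 1 = k
  omega

lemma wordext_posIdx (hm : m.Perm (List.range' 1 n)) {y : ℕ} (hy : y ∈ m) :
    wordext n m (posIdx m y) = y ∧ 1 ≤ posIdx m y ∧ posIdx m y ≤ n := by
  obtain ⟨hlen, hnd, -⟩ := perm_facts hm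
  have hidx : m.idxOf y < m.length := idxOf_lt_length_of_mem hy
  have h2 : posIdx m y ≤ n := by rw [posIdx]; omega
  refine ⟨?_, by rw [posIdx]; omega, h2⟩
  rw [posIdx, wordext_succ n m _ hidx, List.getD_eq_getElem _ _ hidx]
  have := idxOf_get (a := y) (l := m) hidx
  simpa [List.get_eq_getElem] using this

end PermFacts

lemma bridge {n : ℕ} {m : List ℕ} (hm : m.Perm (List.range' 1 n)) (Q : ℕ → ℕ → ℕ → Bool) :
    ((Finset.Icc 1 n).filter
      (fun k => Q (wordext n m (k-1)) (wordext n m k) (wordext n m (k+1)) = true)).card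
    = ((Finset.Icc 1 n).filter
      (fun y => Q (wordext n m (posIdx m y - 1)) y (wordext n m (posIdx m y + 1)) = true)).card := by
  refine Finset.card_nbij' (fun k => wordext n m k) (fun y => posIdx m y) ?_ ?_ ?_ ?_
  · intro k hk
    simp only [Finset.mem_coe, Finset.mem_filter, Finset.mem_Icc] at hk ⊢
    obtain ⟨⟨hk1, hk2⟩, hkQ⟩ := hk
    have hpos := posIdx_wordext hm hk1 hk2
    have hb := wordext_bounds hm hk1 hk2
    refine ⟨⟨hb.1, hb.2⟩, ?_⟩
    show Q (wordext n m (posIdx m (wordext n m k) - 1)) (wordext n m k)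
      (wordext n m (posIdx m (wordext n m k) + 1)) = true
    rw [hpos]
    exact hkQ
  · intro y hy
    simp only [Finset.mem_coe, Finset.mem_filter, Finset.mem_Icc] at hy ⊢
    obtain ⟨⟨hy1, hy2⟩, hyQ⟩ := hy
    have hym : y ∈ m := hm.mem_iff.2 (mem_range'_1.2 ⟨hy1, by omega⟩)
    obtain ⟨hwp, hp1, hp2⟩ := wordext_posIdx hm hym
    refine ⟨⟨hp1, hp2⟩, ?_⟩
    show Q (wordext n m (posIdx m y - 1)) (wordext n m (posIdx m y))
      (wordext n m (posIdx m y + 1)) = true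
    rw [hwp]
    exact hyQ
  · intro k hk
    simp only [Finset.mem_coe, Finset.mem_filter, Finset.mem_Icc] at hk
    exact posIdx_wordext hm hk.1.1 hk.1.2
  · intro y hy
    simp only [Finset.mem_coe, Finset.mem_filter, Finset.mem_Icc] at hy
    have hym : y ∈ m := hm.mem_iff.2 (mem_range'_1.2 ⟨hy.1.1, by omega⟩)
    exact (wordext_posIdx hm hym).1

lemma daL_letters {n : ℕ} {m : List ℕ} (hm : m.Perm (List.range' 1 n)) :
    daL n m = ((Finset.Icc 1 n).filter (fun y => isDA n m y = true)).card := by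
  have step1 : daL n m = ((Finset.Icc 1 n).filter
      (fun k => (decide (wordext n m (k-1) < wordext n m k)
        && decide (wordext n m k < wordext n m (k+1))) = true)).card := by
    rw [daL]
    congr 1
    refine Finset.filter_congr fun k _ => ?_
    simp [Bool.and_eq_true, decide_eq_true_eq]
  rw [step1, bridge hm (fun a b c => decide (a < b) && decide (b < c))]
  congr 1
  refine Finset.filter_congr fun y hy => ?_
  simp only [Finset.mem_Icc] at hy
  have hym : y ∈ m := hm.mem_iff.2 (mem_range'_1.2 ⟨hy.1, by omega⟩)
  have hc : m.contains y = true := by simp; exact hym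
  rw [isDA, hc]
  simp

lemma ddL_letters {n : ℕ} {m : List ℕ} (hm : m.Perm (List.range' 1 n)) :
    ddL n m = ((Finset.Icc 1 n).filter (fun y => isDD n m y = true)).card := by
  have step1 : ddL n m = ((Finset.Icc 1 n).filter
      (fun k => (decide (wordext n m k < wordext n m (k-1))
        && decide (wordext n m (k+1) < wordext n m k)) = true)).card := by
    rw [ddL]
    congr 1
    refine Finset.filter_congr fun k _ => ?_
    simp [Bool.and_eq_true, decide_eq_true_eq]
  rw [step1, bridge hm (fun a b c => decide (b < a) && decide (c < b))]
  congr 1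
  refine Finset.filter_congr fun y hy => ?_
  simp only [Finset.mem_Icc] at hy
  have hym : y ∈ m := hm.mem_iff.2 (mem_range'_1.2 ⟨hy.1, by omega⟩)
  have hc : m.contains y = true := by simp; exact hym
  rw [isDD, hc]
  simp

lemma desL_eq_range : ∀ (m : List ℕ), desL m =
    ((Finset.range (m.length - 1)).filter (fun j => m.getD (j+1) 0 < m.getD j 0)).card := by
  intro m
  induction m with
  | nil => simp [desL]
  | cons a t ih =>
    cases t with
    | nil => simp [desL]
    | cons b t' =>
      have hzip : desL (a :: b :: t') = desL (b :: t') + (if b < a then 1 else 0) := by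
        simp only [desL, List.tail_cons, List.zip_cons_cons, countP_cons]
        simp
      have hlen : (a :: b :: t').length - 1 = t'.length + 1 := by simp
      have hlen2 : (b :: t').length - 1 = t'.length := by simp
      rw [hzip, ih, hlen2, hlen, filter_range_succ]
      congr 1

lemma desL_stat {n : ℕ} {m : List ℕ} (hm : m.Perm (List.range' 1 n)) (hn : 1 ≤ n) :
    desL m = ((Finset.Icc 1 n).filter
      (fun k => decide (wordext n m k < wordext n m (k+1)) = false)).card := by
  obtain ⟨hlen, hnd, hbd⟩ := perm_facts hm
  rw [filter_Icc_range]
  rw [show Finset.range n = Finset.range ((n-1)+1) from by congr 1; omega]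
  rw [filter_range_last]
  · rw [desL_eq_range m, hlen]
    congr 1
    refine Finset.filter_congr fun j hj => ?_
    simp only [Finset.mem_range] at hj
    have hj1 : j < m.length := by omega
    have hj2 : j + 1 < m.length := by omega
    have hw1 : wordext n m (j+1) = m.getD j 0 := wordext_succ n m j hj1
    have hw2 : wordext n m (j+1+1) = m.getD (j+1) 0 := wordext_succ n m (j+1) hj2
    have hne := (wordext_adj_ne hm (by omega : 1 ≤ j+1) (by omega : j+1 ≤ n)).2
    rw [hw1, hw2] at hne ⊢
    simp only [decide_eq_false_iff_not, not_lt]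
    omega
  · have h1 : (1 : ℕ) ≤ n - 1 + 1 := by omega
    have h2 : n - 1 + 1 ≤ n := by omega
    have hb := wordext_bounds hm h1 h2
    have htop : wordext n m (n - 1 + 1 + 1) = n + 1 := by
      rw [show n - 1 + 1 + 1 = n + 1 from by omega]
      exact wordext_top n m hlen
    simp only [decide_eq_false_iff_not, not_lt, htop]
    omega

lemma stats_eqs {n : ℕ} {m : List ℕ} (hm : m.Perm (List.range' 1 n)) (hn : 1 ≤ n) :
    valleyL n m = peakL n m + 1 ∧
    peakL n m + valleyL n m + daL n m + ddL n m = n ∧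
    desL m = peakL n m + ddL n m := by
  obtain ⟨hlen, hnd, hbd⟩ := perm_facts hm
  have hpeak : peakL n m = ((Finset.Icc 1 n).filter (fun k =>
      (decide (wordext n m (k-1) < wordext n m k)) = true ∧
      (decide (wordext n m k < wordext n m (k+1))) = false)).card := by
    rw [peakL]
    congr 1
    refine Finset.filter_congr fun k hk => ?_
    simp only [Finset.mem_Icc] at hk
    have hne := wordext_adj_ne hm hk.1 hk.2
    simp only [decide_eq_true_eq, decide_eq_false_iff_not, not_lt]
    omega
  have hvalley : valleyL n m = ((Finset.Icc 1 n).filter (fun k =>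
      (decide (wordext n m (k-1) < wordext n m k)) = false ∧
      (decide (wordext n m k < wordext n m (k+1))) = true)).card := by
    rw [valleyL]
    congr 1
    refine Finset.filter_congr fun k hk => ?_
    simp only [Finset.mem_Icc] at hk
    have hne := wordext_adj_ne hm hk.1 hk.2
    simp only [decide_eq_true_eq, decide_eq_false_iff_not, not_lt]
    omega
  have hda : daL n m = ((Finset.Icc 1 n).filter (fun k =>
      (decide (wordext n m (k-1) < wordext n m k)) = true ∧
      (decide (wordext n m k < wordext n m (k+1))) = true)).card := by
    rw [daL]
    congr 1
    refine Finset.filter_congr fun k hk => ?_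
    simp only [Finset.mem_Icc] at hk
    simp only [decide_eq_true_eq]
  have hdd : ddL n m = ((Finset.Icc 1 n).filter (fun k =>
      (decide (wordext n m (k-1) < wordext n m k)) = false ∧
      (decide (wordext n m k < wordext n m (k+1))) = false)).card := by
    rw [ddL]
    congr 1
    refine Finset.filter_congr fun k hk => ?_
    simp only [Finset.mem_Icc] at hk
    have hne := wordext_adj_ne hm hk.1 hk.2
    simp only [decide_eq_false_iff_not, not_lt]
    omega
  set s : ℕ → Bool := fun j => decide (wordext n m j < wordext n m (j+1)) with hs
  have hcong : ∀ k, 1 ≤ k → s (k-1) = decide (wordext n m (k-1) < wordext n m k) := by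
    intro k hk
    show decide (wordext n m (k-1) < wordext n m (k-1+1)) = _
    rw [show k - 1 + 1 = k from by omega]
  have hconk : ∀ k, s k = decide (wordext n m k < wordext n m (k+1)) := fun k => rfl
  have hpeak' : peakL n m = ((Finset.Icc 1 n).filter (fun k =>
      s (k-1) = true ∧ s k = false)).card := by
    rw [hpeak]
    congr 1
    refine Finset.filter_congr fun k hk => ?_
    simp only [Finset.mem_Icc] at hk
    rw [hcong k hk.1, hconk k]
  have hvalley' : valleyL n m = ((Finset.Icc 1 n).filter (fun k =>
      s (k-1) = false ∧ s k = true)).card := by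
    rw [hvalley]
    congr 1
    refine Finset.filter_congr fun k hk => ?_
    simp only [Finset.mem_Icc] at hk
    rw [hcong k hk.1, hconk k]
  have hda' : daL n m = ((Finset.Icc 1 n).filter (fun k =>
      s (k-1) = true ∧ s k = true)).card := by
    rw [hda]
    congr 1
    refine Finset.filter_congr fun k hk => ?_
    simp only [Finset.mem_Icc] at hk
    rw [hcong k hk.1, hconk k]
  have hdd' : ddL n m = ((Finset.Icc 1 n).filter (fun k =>
      s (k-1) = false ∧ s k = false)).card := by
    rw [hdd]
    congr 1
    refine Finset.filter_congr fun k hk => ?_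
    simp only [Finset.mem_Icc] at hk
    rw [hcong k hk.1, hconk k]
  have hs0 : s 0 = false := by
    rw [hconk 0]
    simp only [decide_eq_false_iff_not, not_lt, wordext_zero, Nat.zero_add]
    have := wordext_bounds hm (le_refl 1) hn
    omega
  have hsn : s n = true := by
    rw [hconk n]
    simp only [decide_eq_true_eq, wordext_top n m hlen]
    have := wordext_bounds hm hn (le_refl n)
    omega
  have halt := alt_count s n
  rw [hs0, hsn] at halt
  simp only [if_true, if_false, Bool.false_eq_true, ite_true, ite_false] at halt
  have hfour := four_split s n
  have hdess := des_split s n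
  have hdes : desL m = ((Finset.Icc 1 n).filter (fun k => s k = false)).card := desL_stat hm hn
  refine ⟨?_, ?_, ?_⟩
  · rw [hvalley', hpeak']
    omega
  · rw [hpeak', hvalley', hda', hdd']
    omega
  · rw [hdes, hpeak', hdd', hdess]

/-- `des(f(π)) + des(π) = n - 1` where `f = φ'_{[n]}`. -/
theorem des_fsAll (n : ℕ) (l : List ℕ) (hl : l.Perm (List.range' 1 n)) :
    desL (fsAll n l) + desL l = n - 1 := by
  rcases Nat.eq_zero_or_pos n with rfl | hn
  · have hnil : l = [] := by
      have : List.range' 1 0 = [] := rfl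
      rw [this] at hl
      exact hl.eq_nil
    subst hnil
    simp [fsAll, desL]
  · obtain ⟨hlen, hnd, hbd⟩ := perm_facts hl
    have hmdef : fsAll n l = (List.range' 1 n).foldl (fun v x => phi' n x v) l := rfl
    obtain ⟨hperm, hswap, hsame⟩ := fold_inv n (List.range' 1 n) l List.nodup_range'
      (fun x hx => by rw [mem_range'_1] at hx; omega) hnd
    rw [← hmdef] at hperm hswap hsame
    have hm : (fsAll n l).Perm (List.range' 1 n) := hperm.trans hl
    have hda_dd : daL n (fsAll n l) = ddL n l := by
      rw [daL_letters hm, ddL_letters hl]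
      congr 1
      refine Finset.filter_congr fun y hy => ?_
      simp only [Finset.mem_Icc] at hy
      have hyr : y ∈ List.range' 1 n := mem_range'_1.2 ⟨hy.1, by omega⟩
      rw [(hswap y hyr).1]
    have hdd_da : ddL n (fsAll n l) = daL n l := by
      rw [ddL_letters hm, daL_letters hl]
      congr 1
      refine Finset.filter_congr fun y hy => ?_
      simp only [Finset.mem_Icc] at hy
      have hyr : y ∈ List.range' 1 n := mem_range'_1.2 ⟨hy.1, by omega⟩
      rw [(hswap y hyr).2]
    obtain ⟨v1, f1, d1⟩ := stats_eqs hm hn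
    obtain ⟨v2, f2, d2⟩ := stats_eqs hl hn
    rw [d1, d2]
    omega
end FS
end

section
/- Let i_1 < i_2 < ⋯ < i_d be the descent positions of π = a_1⋯a_n ∈ S_n. Then S(π) = r_{i_d} r_{i_{d-1}} ⋯ r_{i_1}(π), where S is the stack-sorting operator and r_i moves the letter at the descent position i rightward. -/
namespace FS

def maxElem (l : List ℕ) : ℕ := l.foldr max 0

theorem maxElem_cons (a : ℕ) (l : List ℕ) : maxElem (a :: l) = max a (maxElem l) := rfl

theorem maxElem_mem (a : ℕ) (t : List ℕ) : maxElem (a :: t) ∈ a :: t := by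
  induction t generalizing a with
  | nil => simp [maxElem]
  | cons b t ih =>
    rw [maxElem_cons]
    rcases max_choice a (maxElem (b :: t)) with h1 | h1 <;> rw [h1]
    · exact List.mem_cons_self
    · exact List.mem_cons_of_mem _ (ih b)

theorem takeWhile_length_lt {p : ℕ → Bool} {l : List ℕ} {x : ℕ} (hx : x ∈ l)
    (hp : p x = false) : (l.takeWhile p).length < l.length := by
  have hd : l.dropWhile p ≠ [] := by
    intro h
    rw [List.dropWhile_eq_nil_iff] at h
    have := h x hx
    rw [hp] at this
    exact Bool.noConfusion this
  have h2 := congrArg List.length (List.takeWhile_append_dropWhile (p := p) (l := l))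
  rw [List.length_append] at h2
  have h3 : 0 < (l.dropWhile p).length := List.length_pos_iff.mpr hd
  omega

theorem dropWhile_tail_length_lt {p : ℕ → Bool} {l : List ℕ} (hl : 0 < l.length) :
    ((l.dropWhile p).tail).length < l.length := by
  have h1 : (l.dropWhile p).length ≤ l.length := by
    conv_rhs => rw [← List.takeWhile_append_dropWhile (p := p) (l := l)]
    rw [List.length_append]; omega
  rw [List.length_tail]
  omega

/-- The stack-sorting operator: `S([]) = []` and `S(LmR) = S(L)S(R)m` where `m` is the
greatest letter. -/
def ssort : List ℕ → List ℕ
  | [] => []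
  | a :: t =>
    ssort ((a :: t).takeWhile (fun y => y != maxElem (a :: t))) ++
      ssort (((a :: t).dropWhile (fun y => y != maxElem (a :: t))).tail) ++
      [maxElem (a :: t)]
termination_by l => l.length
decreasing_by
  · exact takeWhile_length_lt (maxElem_mem a t) (by simp)
  · exact dropWhile_tail_length_lt (by simp)


/-- `r` applied to the letter `x` of `l` (with boundary sentinel `n+1`): `x` is removed and
reinserted between the first pair of consecutive letters `a_j, a_{j+1}` to its right with
`a_j < x < a_{j+1}`. -/
def rv (n x : ℕ) (l : List ℕ) : List ℕ :=
  let R := (l.dropWhile (fun y => y != x)).tail ++ [n + 1]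
  (l.takeWhile (fun y => y != x) ++ R.takeWhile (fun y => decide (y < x)) ++
      x :: R.dropWhile (fun y => decide (y < x))).dropLast

theorem ssort_nil : ssort [] = [] := by rw [ssort]
theorem ssort_cons (a : ℕ) (t : List ℕ) :
    ssort (a :: t) =
      ssort ((a :: t).takeWhile (fun y => y != maxElem (a :: t))) ++
        ssort (((a :: t).dropWhile (fun y => y != maxElem (a :: t))).tail) ++
        [maxElem (a :: t)] := by rw [ssort]

theorem le_maxElem {l : List ℕ} {y : ℕ} (hy : y ∈ l) : y ≤ maxElem l := by
  induction l with
  | nil => simp at hy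
  | cons a t ih =>
    rw [maxElem_cons]
    rcases List.mem_cons.1 hy with rfl | h
    · exact le_max_left _ _
    · exact le_trans (ih h) (le_max_right _ _)

theorem dropWhile_eq_cons {m : ℕ} {l : List ℕ} (hm : m ∈ l) :
    l.dropWhile (fun y => y != m) = m :: (l.dropWhile (fun y => y != m)).tail := by
  induction l with
  | nil => simp at hm
  | cons a t ih =>
    by_cases h : a = m
    · subst h; simp [List.dropWhile_cons]
    · have hm' : m ∈ t := by
        rcases List.mem_cons.1 hm with h1 | h1
        · exact absurd h1.symm h
        · exact h1
      simp only [List.dropWhile_cons, show (a != m) = true by simpa using h, if_pos]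
      exact ih hm'

theorem ssort_eq (a : ℕ) (t : List ℕ) :
    ∃ L R, a :: t = L ++ maxElem (a :: t) :: R ∧
      ssort (a :: t) = ssort L ++ ssort R ++ [maxElem (a :: t)] ∧
      L.length < (a :: t).length ∧ R.length < (a :: t).length ∧
      (∀ y ∈ L, y ≠ maxElem (a :: t)) := by
  refine ⟨(a :: t).takeWhile (fun y => y != maxElem (a :: t)),
    ((a :: t).dropWhile (fun y => y != maxElem (a :: t))).tail, ?_, ssort_cons a t,
    takeWhile_length_lt (maxElem_mem a t) (by simp),
    dropWhile_tail_length_lt (by simp), ?_⟩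
  · conv_lhs => rw [← List.takeWhile_append_dropWhile
      (p := fun y => y != maxElem (a :: t)) (l := a :: t)]
    rw [← dropWhile_eq_cons (maxElem_mem a t)]
  · intro y hy
    simpa using List.mem_takeWhile_imp hy

theorem ssort_perm : ∀ l : List ℕ, (ssort l).Perm l := by
  have H : ∀ N : ℕ, ∀ l : List ℕ, l.length ≤ N → (ssort l).Perm l := by
    intro N
    induction N with
    | zero =>
      intro l hl
      rw [List.length_eq_zero_iff.1 (Nat.le_zero.1 hl), ssort_nil]
    | succ N ih =>
      intro l hl
      cases l with
      | nil => rw [ssort_nil]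
      | cons a t =>
        obtain ⟨L, R, h1, h2, h3, h4, _⟩ := ssort_eq a t
        rw [h2]
        have p1 := ih L (by omega)
        have p2 := ih R (by omega)
        refine ((p1.append p2).append (List.Perm.refl [maxElem (a :: t)])).trans ?_
        conv_rhs => rw [h1]
        exact (List.perm_append_singleton _ (L ++ R)).trans List.perm_middle.symm
  exact fun l => H l.length l le_rfl


theorem tw_append {p : ℕ → Bool} {s : ℕ} (hs : p s = false) (T Z : List ℕ) :
    (T ++ s :: Z).takeWhile p = T.takeWhile p := by
  induction T with
  | nil => simp [List.takeWhile_cons, hs]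
  | cons a t ih => by_cases h : p a <;> simp [List.takeWhile_cons, h, ih]

theorem dw_append {p : ℕ → Bool} {s : ℕ} (hs : p s = false) (T Z : List ℕ) :
    (T ++ s :: Z).dropWhile p = T.dropWhile p ++ s :: Z := by
  induction T with
  | nil => simp [List.dropWhile_cons, hs]
  | cons a t ih => by_cases h : p a <;> simp [List.dropWhile_cons, h, ih]

theorem rv_split (n x : ℕ) (P T : List ℕ) (hP : ∀ y ∈ P, y ≠ x) (hx : x ≤ n) :
    rv n x (P ++ x :: T) =
      P ++ (T ++ [n+1]).takeWhile (fun y => decide (y < x)) ++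
        x :: ((T ++ [n+1]).dropWhile (fun y => decide (y < x))).dropLast := by
  have htw : (P ++ x :: T).takeWhile (fun y => y != x) = P := by
    rw [tw_append (by simp)]
    rw [List.takeWhile_eq_self_iff]
    intro y hy; simpa using hP y hy
  have hdw : (P ++ x :: T).dropWhile (fun y => y != x) = x :: T := by
    rw [dw_append (by simp)]
    have : P.dropWhile (fun y => y != x) = [] := by
      rw [List.dropWhile_eq_nil_iff]
      intro y hy; simpa using hP y hy
    simp [this]
  have hdnil : (T ++ [n+1]).dropWhile (fun y => decide (y < x)) =
      T.dropWhile (fun y => decide (y < x)) ++ [n+1] :=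
    dw_append (by simp; omega) T []
  rw [rv]
  simp only [htw, hdw, List.tail_cons]
  have hDne : (T ++ [n+1]).dropWhile (fun y => decide (y < x)) ≠ [] := by
    rw [hdnil]; simp
  rw [List.dropLast_append_of_ne_nil (List.cons_ne_nil _ _),
    List.dropLast_cons_of_ne_nil hDne, List.append_assoc]

theorem exists_split_of_mem {x : ℕ} {w : List ℕ} (hx : x ∈ w) :
    ∃ P T, w = P ++ x :: T ∧ ∀ y ∈ P, y ≠ x := by
  induction w with
  | nil => simp at hx
  | cons a t ih =>
    by_cases h : a = x
    · exact ⟨[], t, by simp [h], by simp⟩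
    · have hx' : x ∈ t := by
        rcases List.mem_cons.1 hx with h1 | h1
        · exact absurd h1.symm h
        · exact h1
      obtain ⟨P, T, h1, h2⟩ := ih hx'
      exact ⟨a :: P, T, by simp [h1], by
        intro y hy
        rcases List.mem_cons.1 hy with rfl | hy
        · exact h
        · exact h2 y hy⟩

theorem rv_split' (n x : ℕ) (P T : List ℕ) (hP : ∀ y ∈ P, y ≠ x) (hx : x ≤ n) :
    rv n x (P ++ x :: T) =
      P ++ T.takeWhile (fun y => decide (y < x)) ++
        x :: T.dropWhile (fun y => decide (y < x)) := by
  rw [rv_split n x P T hP hx, tw_append (by simp; omega) T [],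
    dw_append (by simp; omega) T [],
    List.dropLast_append_of_ne_nil (l := [n+1]) (by simp)]
  simp

theorem rv_perm (n x : ℕ) (w : List ℕ) (hx : x ∈ w) (hxn : x ≤ n) :
    (rv n x w).Perm w := by
  obtain ⟨P, T, rfl, hP⟩ := exists_split_of_mem hx
  rw [rv_split' n x P T hP hxn]
  have h1 : ((P ++ T.takeWhile (fun y => decide (y < x))) ++
      x :: T.dropWhile (fun y => decide (y < x))).Perm
      (x :: ((P ++ T.takeWhile (fun y => decide (y < x))) ++
        T.dropWhile (fun y => decide (y < x)))) := List.perm_middle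
  have h2 : (P ++ x :: T).Perm (x :: (P ++ T)) := List.perm_middle
  have h3 : (P ++ T.takeWhile (fun y => decide (y < x))) ++
      T.dropWhile (fun y => decide (y < x)) = P ++ T := by
    rw [List.append_assoc, List.takeWhile_append_dropWhile]
  rw [h3] at h1
  exact h1.trans h2.symm

theorem rv_mid (n x m : ℕ) (A B R : List ℕ) (hA : ∀ y ∈ A, y ≠ x) (hxB : x ∈ B)
    (hxm : x < m) (hxn : x ≤ n) :
    rv n x (A ++ B ++ m :: R) = A ++ rv n x B ++ m :: R := by
  obtain ⟨P, T, rfl, hP⟩ := exists_split_of_mem hxB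
  have hAP : ∀ y ∈ A ++ P, y ≠ x := by
    intro y hy; rcases List.mem_append.1 hy with h | h
    · exact hA y h
    · exact hP y h
  have e1 : A ++ (P ++ x :: T) ++ m :: R = (A ++ P) ++ x :: (T ++ m :: R) := by simp
  rw [e1, rv_split' n x (A ++ P) (T ++ m :: R) hAP hxn, rv_split' n x P T hP hxn,
    tw_append (by simp; omega) T (R), dw_append (by simp; omega) T (R)]
  simp

def descLetters (l : List ℕ) : List ℕ :=
  ((List.range' 1 (l.length - 1)).filter
      (fun i => decide (l.getD i 0 < l.getD (i - 1) 0))).map (fun i => l.getD (i - 1) 0)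

theorem descLetters_nil : descLetters [] = [] := by simp [descLetters]
theorem descLetters_single (a : ℕ) : descLetters [a] = [] := by simp [descLetters]

theorem descLetters_cons (a b : ℕ) (t : List ℕ) :
    descLetters (a :: b :: t) =
      (if b < a then a :: descLetters (b :: t) else descLetters (b :: t)) := by
  have hlen : (a :: b :: t).length - 1 = t.length + 1 := by simp
  have hr : List.range' 1 (t.length + 1) = 1 :: List.range' 2 t.length :=
    List.range'_succ (s := 1) (n := t.length) (step := 1)
  have hr2 : List.range' 2 t.length = (List.range' 1 t.length).map (1 + ·) :=
    (List.map_add_range' (a := 1) 1 t.length 1).symm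
  have hmain : ((List.range' 1 t.length).filter
        ((fun i => decide ((a :: b :: t).getD i 0 < (a :: b :: t).getD (i - 1) 0)) ∘ (1 + ·))).map
        ((fun i => (a :: b :: t).getD (i - 1) 0) ∘ (1 + ·)) = descLetters (b :: t) := by
    rw [descLetters]
    have hlen2 : (b :: t).length - 1 = t.length := by simp
    rw [hlen2]
    rw [List.filter_congr (fun j hj => ?_)]
    · apply List.map_congr_left
      intro j hj
      rw [List.mem_filter] at hj
      have h1 : 1 ≤ j := (List.mem_range'_1.1 hj.1).1
      obtain ⟨j', rfl⟩ : ∃ j', j = j' + 1 := ⟨j - 1, by omega⟩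
      simp only [Function.comp]
      have e1 : 1 + (j' + 1) = (j' + 1) + 1 := by omega
      simp only [e1, Nat.add_sub_cancel, List.getD_cons_succ]
    · have h1 : 1 ≤ j := (List.mem_range'_1.1 hj).1
      obtain ⟨j', rfl⟩ : ∃ j', j = j' + 1 := ⟨j - 1, by omega⟩
      simp only [Function.comp]
      have e1 : 1 + (j' + 1) = (j' + 1) + 1 := by omega
      simp only [e1, Nat.add_sub_cancel, List.getD_cons_succ]
  rw [descLetters, hlen, hr, List.filter_cons, hr2, List.filter_map]
  simp only [List.getD_cons_succ, List.getD_cons_zero, Nat.sub_self]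
  by_cases h : b < a
  · rw [if_pos (by simpa using h), List.map_cons, List.map_map, hmain, if_pos h]
    simp
  · rw [if_neg (by simpa using h), List.map_map, hmain, if_neg h]

theorem descLetters_subset {l : List ℕ} {x : ℕ} (hx : x ∈ descLetters l) : x ∈ l := by
  rw [descLetters] at hx
  simp only [List.mem_map, List.mem_filter] at hx
  obtain ⟨i, ⟨hi1, _⟩, rfl⟩ := hx
  have h1 := List.mem_range'_1.1 hi1
  have h2 : i - 1 < l.length := by omega
  rw [List.getD_eq_getElem l 0 h2]
  exact List.getElem_mem h2

theorem descLetters_append (m : ℕ) (L R : List ℕ)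
    (hL : ∀ y ∈ L, y < m) (hR : ∀ y ∈ R, y < m) :
    descLetters (L ++ m :: R) =
      descLetters L ++ (if R = [] then [] else m :: descLetters R) := by
  induction L with
  | nil =>
    cases R with
    | nil => simp [descLetters_single, descLetters_nil]
    | cons b t =>
      simp only [List.nil_append, descLetters_nil]
      rw [descLetters_cons m b t, if_pos (hR b (by simp))]
      simp
  | cons a L' ih =>
    have ha : a < m := hL a (by simp)
    have hL' : ∀ y ∈ L', y < m := fun y hy => hL y (by simp [hy])
    cases L' with
    | nil =>
      simp only [List.cons_append, List.nil_append]
      rw [descLetters_cons a m (R), if_neg (by omega), descLetters_single,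
        List.nil_append]
      exact (by
        cases R with
        | nil => simp [descLetters_single]
        | cons b t =>
          rw [descLetters_cons m b t, if_pos (hR b (by simp))]
          simp)
    | cons c L'' =>
      have hstep : descLetters (a :: c :: (L'' ++ m :: R)) =
          (if c < a then a :: descLetters (c :: (L'' ++ m :: R))
            else descLetters (c :: (L'' ++ m :: R))) := descLetters_cons a c _
      have hce : (c :: L'') ++ m :: R = c :: (L'' ++ m :: R) := by simp
      have ih' := ih hL'
      rw [hce] at ih'
      simp only [List.cons_append] at hstep ⊢
      rw [hstep, ih', descLetters_cons a c L'']
      by_cases h : c < a <;> simp [h]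


theorem fold_stage (n m : ℕ) (A R B₀ : List ℕ) (hm : m ≤ n) :
    ∀ (ds B : List ℕ), B.Perm B₀ →
      (∀ x ∈ ds, x ∈ B₀) → (∀ x ∈ ds, x < m) → (∀ x ∈ ds, ∀ y ∈ A, y ≠ x) →
      List.foldl (fun w x => rv n x w) (A ++ B ++ m :: R) ds =
        A ++ List.foldl (fun w x => rv n x w) B ds ++ m :: R := by
  intro ds
  induction ds with
  | nil => intro B _ _ _ _; simp
  | cons x ds ih =>
    intro B hB h1 h2 h3
    have hxB : x ∈ B := hB.mem_iff.2 (h1 x (by simp))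
    have hxm : x < m := h2 x (by simp)
    have hxn : x ≤ n := by omega
    rw [List.foldl_cons, List.foldl_cons, rv_mid n x m A B R (h3 x (by simp)) hxB hxm hxn]
    exact ih (rv n x B) ((rv_perm n x B hxB hxn).trans hB) (fun y hy => h1 y (by simp [hy]))
      (fun y hy => h2 y (by simp [hy])) (fun y hy => h3 y (by simp [hy]))

theorem main_aux (n : ℕ) : ∀ N : ℕ, ∀ l : List ℕ, l.length ≤ N → l.Nodup →
    (∀ y ∈ l, y ≤ n) →
    ssort l = List.foldl (fun w x => rv n x w) l (descLetters l) := by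
  intro N
  induction N with
  | zero =>
    intro l hl _ _
    rw [List.length_eq_zero_iff.1 (Nat.le_zero.1 hl), ssort_nil, descLetters_nil]
    rfl
  | succ N ih =>
    intro l hl hnd hbd
    cases l with
    | nil => rw [ssort_nil, descLetters_nil]; rfl
    | cons a t =>
      obtain ⟨L, R, h1, h2, h3, h4, h5⟩ := ssort_eq a t
      set m := maxElem (a :: t) with hmdef
      have hmem : m ∈ a :: t := maxElem_mem a t
      have hmn : m ≤ n := hbd m hmem
      have hnd' : (L ++ m :: R).Nodup := h1 ▸ hnd
      have hndL : L.Nodup := (List.nodup_append.1 hnd').1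
      have hndmR : (m :: R).Nodup := (List.nodup_append.1 hnd').2.1
      have hndR : R.Nodup := (List.nodup_cons.1 hndmR).2
      have hmR : m ∉ R := (List.nodup_cons.1 hndmR).1
      have hdisj : L.Disjoint (m :: R) := fun _ ha hb => (List.nodup_append.1 hnd').2.2 _ ha _ hb rfl
      have hsubL : ∀ y ∈ L, y ∈ a :: t := fun y hy => h1 ▸ List.mem_append_left _ hy
      have hsubR : ∀ y ∈ R, y ∈ a :: t := fun y hy =>
        h1 ▸ List.mem_append_right _ (List.mem_cons_of_mem _ hy)
      have hLm : ∀ y ∈ L, y < m := fun y hy =>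
        lt_of_le_of_ne (le_maxElem (hsubL y hy)) (h5 y hy)
      have hRm : ∀ y ∈ R, y < m := fun y hy =>
        lt_of_le_of_ne (le_maxElem (hsubR y hy)) (fun h => hmR (h ▸ hy))
      have hbdL : ∀ y ∈ L, y ≤ n := fun y hy => hbd y (hsubL y hy)
      have hbdR : ∀ y ∈ R, y ≤ n := fun y hy => hbd y (hsubR y hy)
      have ihL := ih L (by omega) hndL hbdL
      have ihR := ih R (by omega) hndR hbdR
      have hdesc : descLetters (a :: t) =
          descLetters L ++ (if R = [] then [] else m :: descLetters R) := by
        rw [h1]; exact descLetters_append m L R hLm hRm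
      rw [hdesc, List.foldl_append]
      have stage1 : List.foldl (fun w x => rv n x w) (a :: t) (descLetters L) =
          ssort L ++ m :: R := by
        have := fold_stage n m [] R L hmn (descLetters L) L (List.Perm.refl L)
          (fun x hx => descLetters_subset hx)
          (fun x hx => hLm x (descLetters_subset hx))
          (fun x _ y hy => absurd hy List.not_mem_nil)
        rw [List.nil_append] at this
        rw [h1, this, ihL, List.nil_append]
      rw [stage1]
      by_cases hR : R = []
      · subst hR
        rw [if_pos rfl, h2, ssort_nil]
        simp
      · rw [if_neg hR]
        obtain ⟨b, R', rfl⟩ : ∃ b R', R = b :: R' := by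
          cases R with
          | nil => exact absurd rfl hR
          | cons b R' => exact ⟨b, R', rfl⟩
        have hssL : ∀ y ∈ ssort L, y ≠ m := fun y hy =>
          h5 y ((ssort_perm L).subset hy)
        have hstep : rv n m (ssort L ++ m :: (b :: R')) =
            ssort L ++ (b :: R') ++ m :: [] := by
          rw [rv_split' n m (ssort L) (b :: R') hssL hmn]
          have htw : (b :: R').takeWhile (fun y => decide (y < m)) = b :: R' := by
            rw [List.takeWhile_eq_self_iff]
            intro y hy; simpa using hRm y hy
          have hdw : (b :: R').dropWhile (fun y => decide (y < m)) = [] := by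
            rw [List.dropWhile_eq_nil_iff]
            intro y hy; simpa using hRm y hy
          rw [htw, hdw]
        rw [List.foldl_cons, hstep]
        have stage2 := fold_stage n m (ssort L) [] (b :: R') hmn
          (descLetters (b :: R')) (b :: R') (List.Perm.refl _)
          (fun x hx => descLetters_subset hx)
          (fun x hx => hRm x (descLetters_subset hx))
          (fun x hx y hy => fun he =>
            hdisj ((ssort_perm L).subset (he ▸ hy))
              (List.mem_cons_of_mem _ (descLetters_subset hx)))
        rw [stage2, h2, ihR]

/-- if `i_1 < ⋯ < i_d` are the descent positions of `π = a_1⋯a_n`, then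
`S(π) = r_{i_d} r_{i_{d-1}} ⋯ r_{i_1}(π)` (the operator `r` is applied first at the
smallest descent, to the letter `a_{i_1}`, and so on). -/
theorem ssort_eq_rmoves (n : ℕ) (l : List ℕ) (hl : l.Perm (List.range' 1 n)) :
    ssort l =
      List.foldl (fun w x => rv n x w) l
        (((List.range' 1 (n - 1)).filter
            (fun i => decide (l.getD i 0 < l.getD (i - 1) 0))).map
          (fun i => l.getD (i - 1) 0)) := by
  have hlen : l.length = n := by rw [hl.length_eq, List.length_range']
  have hnd : l.Nodup := hl.nodup_iff.2 (List.nodup_range' (s := 1) (n := n))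
  have hbd : ∀ y ∈ l, y ≤ n := by
    intro y hy
    have := List.mem_range'_1.1 (hl.subset hy)
    omega
  have := main_aux n l.length l le_rfl hnd hbd
  rw [this, descLetters, hlen]


end FS
end

section
/- The generalized pattern statistic (2-31) is invariant under the Foata–Strehl involutions: for every π ∈ S_n and x ∈ [n], (2-31)(φ'_x(π)) = (2-31)(π), where φ'_x is the modified Foata–Strehl involution. -/
namespace FS

/-- The generalized pattern statistic `(2-31)`: the number of pairs `1 ≤ i < j ≤ n-1`
with `a_{j+1} < a_i < a_j`. -/
def s231 (l : List ℕ) : ℕ :=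
  ((Finset.Icc 1 (l.length - 1) ×ˢ Finset.Icc 1 (l.length - 1)).filter
    (fun p => p.1 < p.2 ∧ l.getD p.2 0 < l.getD (p.1 - 1) 0 ∧
      l.getD (p.1 - 1) 0 < l.getD (p.2 - 1) 0)).card

def cnt (pre : List ℕ) (b a : ℕ) : ℕ := pre.countP (fun y => decide (b < y ∧ y < a))

def g : List ℕ → List ℕ → ℕ
  | pre, a :: b :: t => cnt pre b a + g (pre ++ [a]) (b :: t)
  | _, _ => 0

lemma g_nil (pre : List ℕ) : g pre [] = 0 := rfl
lemma g_single (pre : List ℕ) (a : ℕ) : g pre [a] = 0 := rfl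

lemma cnt_perm {p q : List ℕ} (h : p.Perm q) (b a : ℕ) : cnt p b a = cnt q b a :=
  h.countP_eq _

lemma g_perm : ∀ (l : List ℕ) {p q : List ℕ}, p.Perm q → g p l = g q l
  | [], _, _, _ => rfl
  | [a], _, _, _ => rfl
  | a :: b :: t, p, q, h => by
    show cnt p b a + g (p ++ [a]) (b :: t) = cnt q b a + g (q ++ [a]) (b :: t)
    rw [cnt_perm h, g_perm (b :: t) (h.append_right [a])]

lemma g_cons (pre : List ℕ) (d : ℕ) (w : List ℕ) (hw : w ≠ []) :
    g pre (d :: w) = cnt pre (w.headD 0) d + g (pre ++ [d]) w := by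
  cases w with
  | nil => exact absurd rfl hw
  | cons b t => rfl

lemma cnt_empty_interval (pre : List ℕ) {b a : ℕ} (h : a ≤ b) : cnt pre b a = 0 := by
  simp only [cnt, List.countP_eq_zero]
  intro y _
  simp only [decide_eq_true_eq, not_and]
  omega

/-- Lemma 2': sliding x across a block B of smaller letters, when C starts above x. -/
lemma g_shift (x : ℕ) : ∀ (B : List ℕ) (pre C : List ℕ), (∀ b ∈ B, b < x) →
    (∀ c ∈ C.head?, x < c) → g (pre ++ [x]) (B ++ C) = g pre (B ++ x :: C)
  | [], pre, C, _, hC => by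
    cases C with
    | nil => rfl
    | cons c C' =>
      have hxc : x < c := hC c rfl
      rw [List.nil_append, List.nil_append, g_cons pre x (c :: C') (by simp)]
      simp only [List.headD_cons]
      rw [cnt_empty_interval pre (le_of_lt hxc)]
      simp
  | b :: B', pre, C, hB, hC => by
    have hbx : b < x := hB b (by simp)
    rw [List.cons_append, List.cons_append]
    cases hBC : B' ++ C with
    | nil =>
      have hB' : B' = [] := by cases B' <;> simp_all
      have hC0 : C = [] := by cases C <;> simp_all
      subst hB' hC0
      show g (pre ++ [x]) [b] = g pre [b, x]
      rw [g_single]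
      show 0 = cnt pre x b + g (pre ++ [b]) [x]
      rw [cnt_empty_interval pre (le_of_lt hbx), g_single]
    | cons h' t' =>
      rw [← hBC, g_cons (pre ++ [x]) b (B' ++ C) (by rw [hBC]; simp)]
      have hhead : cnt (pre ++ [x]) ((B' ++ C).headD 0) b = cnt pre ((B' ++ C).headD 0) b := by
        rcases B' with _ | ⟨b2, B''⟩
        · rcases C with _ | ⟨c, C'⟩
          · simp at hBC
          · have hxc : x < c := hC c rfl
            simp only [List.nil_append, List.headD_cons]
            unfold cnt
            rw [List.countP_append]
            simp only [List.countP_singleton]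
            have : ¬ (c < x ∧ x < b) := by omega
            simp [this]
        · have hb2 : b2 < x := hB b2 (by simp)
          simp only [List.cons_append, List.headD_cons]
          unfold cnt
          rw [List.countP_append]
          simp only [List.countP_singleton]
          have : ¬ (b2 < x ∧ x < b) := by omega
          simp [this]
      rw [hhead]
      have hperm : (pre ++ [x]) ++ [b] |>.Perm ((pre ++ [b]) ++ [x]) := by
        have : pre ++ [x] ++ [b] = pre ++ [x, b] := by simp
        have h2 : pre ++ [b] ++ [x] = pre ++ [b, x] := by simp
        rw [this, h2]
        exact List.Perm.append_left pre (List.Perm.swap' b x (List.Perm.refl []))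
      rw [g_perm (B' ++ C) hperm]
      rw [g_shift x B' (pre ++ [b]) C (fun y hy => hB y (by simp [hy])) hC]
      rcases B' with _ | ⟨b2, B''⟩
      · simp only [List.nil_append]
        rw [g_cons pre b (x :: C) (by simp)]
        simp only [List.headD_cons]
        rw [cnt_empty_interval pre (le_of_lt hbx)]
        rcases C with _ | ⟨c, C'⟩
        · simp at hBC
        · have hxc : x < c := hC c rfl
          simp only [List.headD_cons]
          rw [cnt_empty_interval pre (by omega : b ≤ c)]
      · rw [g_cons pre b (b2 :: B'' ++ x :: C) (by simp)]
        rfl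

lemma cnt_split {x b a : ℕ} (hbx : b < x) (hxa : x < a) :
    ∀ pre : List ℕ, x ∉ pre → cnt pre x a + cnt pre b x = cnt pre b a
  | [], _ => rfl
  | y :: p, hx => by
    have hyx : y ≠ x := fun h => hx (h ▸ List.mem_cons_self (a := y) (l := p))
    have hxp : x ∉ p := fun h => hx (List.mem_cons_of_mem y h)
    have := cnt_split hbx hxa p hxp
    unfold cnt at this ⊢
    simp only [List.countP_cons, decide_eq_true_eq]
    split_ifs <;> omega

lemma cnt_append_single (pre : List ℕ) (z b a : ℕ) (h : ¬ (b < z ∧ z < a)) :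
    cnt (pre ++ [z]) b a = cnt pre b a := by
  unfold cnt
  rw [List.countP_append]
  simp [h]

/-- crux: A = [] case with a in front -/
lemma g_crux (x a : ℕ) (B C pre : List ℕ) (hxa : x < a) (hB : ∀ b ∈ B, b < x)
    (hC : ∀ c ∈ C.head?, x < c) (hpre : x ∉ pre) :
    g pre (a :: x :: B ++ C) = g pre (a :: B ++ x :: C) := by
  rcases B with _ | ⟨b, B'⟩
  · simp
  · have hbx : b < x := hB b (by simp)
    show cnt pre x a + g (pre ++ [a]) (x :: (b :: B') ++ C)
      = cnt pre b a + g (pre ++ [a]) ((b :: B') ++ x :: C)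
    have step1 : g (pre ++ [a]) (x :: (b :: B') ++ C)
        = cnt (pre ++ [a]) b x + g ((pre ++ [a]) ++ [x]) ((b :: B') ++ C) := by
      rfl
    rw [step1, g_shift x (b :: B') (pre ++ [a]) C hB hC]
    rw [cnt_append_single pre a b x (by omega)]
    have := cnt_split hbx hxa pre hpre
    omega

lemma headD_append_cons (A : List ℕ) (a : ℕ) (u v : List ℕ) :
    (A ++ a :: u).headD 0 = (A ++ a :: v).headD 0 := by
  cases A <;> simp

/-- main sliding lemma with nonempty prefix ending in a > x -/
lemma g_main (x a : ℕ) (B C : List ℕ) (hxa : x < a) (hB : ∀ b ∈ B, b < x)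
    (hC : ∀ c ∈ C.head?, x < c) :
    ∀ (A pre : List ℕ), x ∉ pre → x ∉ A →
      g pre (A ++ a :: x :: B ++ C) = g pre (A ++ a :: B ++ x :: C)
  | [], pre, hpre, _ => by
    simpa using g_crux x a B C pre hxa hB hC hpre
  | d :: A', pre, hpre, hA => by
    have hdx : x ∉ A' := fun h => hA (List.mem_cons_of_mem d h)
    have hd : d ≠ x := fun h => hA (h ▸ List.mem_cons_self (a := d) (l := A'))
    simp only [List.cons_append]
    rw [g_cons pre d (A' ++ a :: x :: B ++ C) (by simp),
      g_cons pre d (A' ++ a :: B ++ x :: C) (by simp)]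
    have hh : (A' ++ a :: x :: B ++ C).headD 0 = (A' ++ a :: B ++ x :: C).headD 0 := by
      have := headD_append_cons A' a (x :: B ++ C) (B ++ x :: C)
      simpa using this
    rw [hh, g_main x a B C hxa hB hC A' (pre ++ [d])
      (by simp [hpre, Ne.symm hd]) hdx]

/-- the key combined lemma -/
lemma g_key (x : ℕ) (W B C : List ℕ) (hW : x ∉ W)
    (hWlast : ∀ w ∈ W.getLast?, x < w) (hB : ∀ b ∈ B, b < x)
    (hC : ∀ c ∈ C.head?, x < c) :
    g [] (W ++ x :: B ++ C) = g [] (W ++ B ++ x :: C) := by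
  rcases eq_or_ne W [] with rfl | hWne
  · simp only [List.nil_append]
    rcases B with _ | ⟨b, B'⟩
    · simp
    · have hbx : b < x := hB b (by simp)
      show cnt [] b x + g ([] ++ [x]) ((b :: B') ++ C) = g [] ((b :: B') ++ x :: C)
      rw [g_shift x (b :: B') [] C hB hC]
      simp [cnt]
  · obtain ⟨A, a, rfl⟩ : ∃ A a, W = A ++ [a] := ⟨W.dropLast, W.getLast hWne, (List.dropLast_append_getLast hWne).symm⟩
    have hxa : x < a := hWlast a (by simp [List.getLast?_concat])
    have hxA : x ∉ A := fun h => hW (by simp [h])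
    have h1 : A ++ [a] ++ x :: B ++ C = A ++ a :: x :: B ++ C := by simp
    have h2 : A ++ [a] ++ B ++ x :: C = A ++ (a :: B ++ x :: C) := by simp
    rw [h1, h2]
    have := g_main x a B C hxa hB hC A [] (by simp) hxA
    simpa using this

lemma countP_take (P : ℕ → Bool) : ∀ (m : ℕ) (l : List ℕ), m ≤ l.length →
    (l.take m).countP P = ∑ i ∈ Finset.range m, (if P (l.getD i 0) = true then 1 else 0)
  | 0, l, _ => by simp
  | m + 1, l, h => by
    have hm : m < l.length := h
    rw [List.take_succ, List.countP_append, Finset.sum_range_succ,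
      countP_take P m l (le_of_lt hm)]
    have : l[m]? = some (l.getD m 0) := by
      rw [List.getD_eq_getElem l 0 hm]
      exact List.getElem?_eq_getElem hm
    rw [this]
    simp [Option.toList, List.countP_singleton]

lemma g_sum : ∀ (l pre : List ℕ),
    g pre l = ∑ j ∈ Finset.range (l.length - 1),
      cnt (pre ++ l.take j) (l.getD (j + 1) 0) (l.getD j 0)
  | [], pre => by simp [g_nil]
  | [a], pre => by simp [g_single]
  | a :: b :: t, pre => by
    show cnt pre b a + g (pre ++ [a]) (b :: t) = _
    have hlen : (a :: b :: t).length - 1 = t.length + 1 := by simp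
    rw [hlen, Finset.sum_range_succ']
    have h0 : cnt (pre ++ (a :: b :: t).take 0) ((a :: b :: t).getD 1 0)
        ((a :: b :: t).getD 0 0) = cnt pre b a := by simp
    rw [h0]
    have hstep : ∀ j ∈ Finset.range t.length,
        cnt (pre ++ (a :: b :: t).take (j + 1)) ((a :: b :: t).getD (j + 1 + 1) 0)
          ((a :: b :: t).getD (j + 1) 0)
        = cnt ((pre ++ [a]) ++ (b :: t).take j) ((b :: t).getD (j + 1) 0)
          ((b :: t).getD j 0) := by
      intro j _
      rw [List.take_succ_cons, List.getD_cons_succ, List.getD_cons_succ]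
      congr 1
      simp
    rw [Finset.sum_congr rfl hstep, g_sum (b :: t) (pre ++ [a])]
    have : (b :: t).length - 1 = t.length := by simp
    rw [this]
    exact Nat.add_comm _ _

lemma s231_eq_g (l : List ℕ) : s231 l = g [] l := by
  set m := l.length - 1 with hm
  rw [s231, Finset.card_filter, Finset.sum_product, Finset.sum_comm]
  rw [g_sum l []]
  have key : ∀ j ∈ Finset.Icc 1 m,
      (∑ i ∈ Finset.Icc 1 m, if (i < j ∧ l.getD j 0 < l.getD (i - 1) 0 ∧
        l.getD (i - 1) 0 < l.getD (j - 1) 0) then 1 else 0)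
      = cnt (l.take (j - 1)) (l.getD j 0) (l.getD (j - 1) 0) := by
    intro j hj
    simp only [Finset.mem_Icc] at hj
    have hsplit : ∀ i : ℕ, (if (i < j ∧ l.getD j 0 < l.getD (i - 1) 0 ∧
        l.getD (i - 1) 0 < l.getD (j - 1) 0) then (1:ℕ) else 0)
        = if i < j then (if (l.getD j 0 < l.getD (i - 1) 0 ∧
            l.getD (i - 1) 0 < l.getD (j - 1) 0) then 1 else 0) else 0 := by
      intro i
      by_cases h1 : i < j <;> by_cases h2 : (l.getD j 0 < l.getD (i - 1) 0 ∧
          l.getD (i - 1) 0 < l.getD (j - 1) 0) <;> simp [h1, h2]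
    rw [Finset.sum_congr rfl (fun i _ => hsplit i), ← Finset.sum_filter]
    have hset : (Finset.Icc 1 m).filter (· < j) = Finset.Icc 1 (j - 1) := by
      ext i
      simp only [Finset.mem_filter, Finset.mem_Icc]
      omega
    rw [hset]
    have hIco : Finset.Icc 1 (j - 1) = Finset.Ico 1 (j - 1 + 1) := by
      ext i; simp
    rw [hIco, Finset.sum_Ico_eq_sum_range]
    have hle : j - 1 ≤ l.length := by omega
    rw [cnt, countP_take _ (j - 1) l hle]
    have : j - 1 + 1 - 1 = j - 1 := by omega
    rw [this]
    apply Finset.sum_congr rfl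
    intro i _
    have h1 : 1 + i - 1 = i := by omega
    rw [h1]
    by_cases h : l.getD j 0 < l.getD i 0 ∧ l.getD i 0 < l.getD (j - 1) 0 <;> simp [h]
  rw [Finset.sum_congr rfl key]
  have hIco : Finset.Icc 1 m = Finset.Ico 1 (m + 1) := by ext i; simp
  rw [hIco, Finset.sum_Ico_eq_sum_range]
  have : m + 1 - 1 = m := by omega
  rw [this]
  apply Finset.sum_congr rfl
  intro j _
  have h1 : 1 + j - 1 = j := by omega
  have h2 : 1 + j = j + 1 := by omega
  rw [h1, h2]
  rfl


lemma takeWhile_ne (x : ℕ) (L R : List ℕ) (hx : x ∉ L) :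
    (L ++ x :: R).takeWhile (fun y => y != x) = L := by
  rw [List.takeWhile_append]
  have h1 : L.takeWhile (fun y => y != x) = L :=
    List.takeWhile_eq_self_iff.2 (fun y hy => by
      simp only [bne_iff_ne, ne_eq]
      exact fun e => hx (e ▸ hy))
  rw [h1, if_pos rfl]
  have h2 : (x :: R).takeWhile (fun y => y != x) = [] := by
    rw [List.takeWhile_cons]
    simp
  rw [h2, List.append_nil]

lemma dropWhile_ne (x : ℕ) (L R : List ℕ) (hx : x ∉ L) :
    (L ++ x :: R).dropWhile (fun y => y != x) = x :: R := by
  rw [List.dropWhile_append]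
  have h1 : L.dropWhile (fun y => y != x) = [] :=
    List.dropWhile_eq_nil_iff.2 (fun y hy => by
      simp only [bne_iff_ne, ne_eq]
      exact fun e => hx (e ▸ hy))
  rw [h1]
  simp [List.dropWhile_cons]

lemma phi_decomp (x : ℕ) (L R : List ℕ) (hxL : x ∉ L) :
    phi x (L ++ x :: R) =
      ((L.reverse.dropWhile (fun y => decide (y < x))).reverse)
        ++ R.takeWhile (fun y => decide (y < x))
        ++ x :: (((L.reverse.takeWhile (fun y => decide (y < x))).reverse)
        ++ R.dropWhile (fun y => decide (y < x))) := by
  have hmem : x ∈ L ++ x :: R := by simp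
  simp only [phi, hmem, if_true, takeWhile_ne x L R hxL, dropWhile_ne x L R hxL,
    List.tail_cons]

lemma posIdx_decomp (x : ℕ) (L R : List ℕ) (hx : x ∉ L) :
    posIdx (L ++ x :: R) x = L.length + 1 := by
  unfold posIdx
  rw [List.idxOf_append_of_notMem hx, List.idxOf_cons_self]

lemma wordext_prev (n x : ℕ) (L R : List ℕ) :
    wordext n (L ++ x :: R) L.length = L.getLast?.getD (n + 1) := by
  rcases eq_or_ne L [] with rfl | h
  · rfl
  · obtain ⟨L₀, a, rfl⟩ : ∃ L₀ a, L = L₀ ++ [a] :=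
      ⟨L.dropLast, L.getLast h, (List.dropLast_append_getLast h).symm⟩
    simp only [wordext]
    rw [show (L₀ ++ [a]).length = L₀.length + 1 by simp]
    rw [List.getD_cons_succ]
    have he : (L₀ ++ [a]) ++ x :: R ++ [n + 1] = L₀ ++ (a :: (x :: R ++ [n + 1])) := by
      simp
    rw [he, List.getD_append_right L₀ _ 0 L₀.length (le_refl _)]
    simp [List.getLast?_concat]

lemma wordext_next (n x : ℕ) (L R : List ℕ) :
    wordext n (L ++ x :: R) (L.length + 2) = R.head?.getD (n + 1) := by
  simp only [wordext]
  rw [show L.length + 2 = (L.length + 1) + 1 from rfl, List.getD_cons_succ]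
  have he : (L ++ x :: R) ++ [n + 1] = L ++ (x :: (R ++ [n + 1])) := by simp
  rw [he, List.getD_append_right L _ 0 (L.length + 1) (by omega)]
  rw [show L.length + 1 - L.length = 1 by omega, List.getD_cons_succ]
  cases R with
  | nil => rfl
  | cons r R' => simp

lemma head?_dropWhile_false {p : ℕ → Bool} {l : List ℕ} {a : ℕ}
    (h : (l.dropWhile p).head? = some a) : p a = false := by
  have := List.head?_dropWhile_not p l
  rw [h] at this
  exact this


lemma head?_mem {l : List ℕ} {a : ℕ} (h : l.head? = some a) : a ∈ l := by
  cases l with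
  | nil => simp at h
  | cons b t => simp at h; simp [h]


/-- the statistic `(2-31)` is invariant under the modified Foata–Strehl
involutions: `(2-31)(φ'_x(π)) = (2-31)(π)`. -/
theorem s231_phi' (n x : ℕ) (l : List ℕ) (hx : x ∈ Finset.Icc 1 n)
    (hl : l.Perm (List.range' 1 n)) :
    s231 (phi' n x l) = s231 l := by
  rw [phi']
  by_cases hcond : (isDA n l x || isDD n l x) = true
  swap
  · rw [if_neg hcond]
  rw [if_pos hcond]
  have hxn : x ≤ n := (Finset.mem_Icc.1 hx).2
  have hnd : l.Nodup := hl.symm.nodup (List.nodup_range' (s := 1) (n := n))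
  have hor : isDA n l x = true ∨ isDD n l x = true := by
    simpa only [Bool.or_eq_true] using hcond
  have hxl : x ∈ l := by
    rcases hor with h | h
    · simp only [isDA, Bool.and_eq_true] at h
      simpa using h.1.1
    · simp only [isDD, Bool.and_eq_true] at h
      simpa using h.1.1
  obtain ⟨L, R, rfl⟩ := List.append_of_mem hxl
  have hnd' := List.nodup_middle.1 hnd
  have hxLR : x ∉ L ++ R := (List.nodup_cons.1 hnd').1
  have hxL : x ∉ L := fun h => hxLR (List.mem_append_left R h)
  have hxR : x ∉ R := fun h => hxLR (List.mem_append_right L h)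
  rw [phi_decomp x L R hxL]
  rcases hor with hDA | hDD
  · -- double ascent case
    simp only [isDA, Bool.and_eq_true, decide_eq_true_eq] at hDA
    obtain ⟨⟨-, -⟩, hnext⟩ := hDA
    rw [posIdx_decomp x L R hxL] at hnext
    rw [show L.length + 1 + 1 = L.length + 2 from rfl, wordext_next n x L R] at hnext
    have hC : ∀ c ∈ R.head?, x < c := by
      intro c hc
      rw [Option.mem_def] at hc
      rw [hc] at hnext
      exact hnext
    have hw4 : R.takeWhile (fun y => decide (y < x)) = [] := by
      cases hR : R with
      | nil => rfl
      | cons r R' =>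
        have : x < r := hC r (by rw [hR]; rfl)
        rw [List.takeWhile_cons, if_neg (by simp; omega)]
    have hw5 : R.dropWhile (fun y => decide (y < x)) = R := by
      have := List.takeWhile_append_dropWhile (p := fun y => decide (y < x)) (l := R)
      rw [hw4] at this
      simpa using this
    set w2 := (L.reverse.takeWhile (fun y => decide (y < x))).reverse with hw2def
    set w1 := (L.reverse.dropWhile (fun y => decide (y < x))).reverse with hw1def
    have hL : L = w1 ++ w2 := by
      rw [hw1def, hw2def, ← List.reverse_append,
        List.takeWhile_append_dropWhile, List.reverse_reverse]
    have hB : ∀ b ∈ w2, b < x := by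
      intro b hb
      rw [hw2def, List.mem_reverse] at hb
      have := List.mem_takeWhile_imp hb
      simpa using this
    have hxw1 : x ∉ w1 := by
      intro h
      rw [hw1def, List.mem_reverse] at h
      exact hxL (List.mem_reverse.1 ((List.dropWhile_sublist _).subset h))
    have hW1last : ∀ w ∈ w1.getLast?, x < w := by
      intro w hw
      rw [hw1def, List.getLast?_reverse, Option.mem_def] at hw
      have hf := head?_dropWhile_false hw
      have hmem : w ∈ L := List.mem_reverse.1 ((List.dropWhile_sublist _).subset (head?_mem hw))
      have hne : w ≠ x := fun e => hxL (e ▸ hmem)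
      simp only [decide_eq_false_iff_not, not_lt] at hf
      omega
    rw [hw4, hw5, s231_eq_g, s231_eq_g]
    have hkey := g_key x w1 w2 R hxw1 hW1last hB hC
    have e1 : w1 ++ [] ++ x :: (w2 ++ R) = w1 ++ x :: w2 ++ R := by simp
    have e2 : (w1 ++ w2) ++ x :: R = w1 ++ w2 ++ x :: R := rfl
    rw [e1, hL]
    exact hkey
  · -- double descent case
    simp only [isDD, Bool.and_eq_true, decide_eq_true_eq] at hDD
    obtain ⟨⟨-, hprev⟩, -⟩ := hDD
    rw [posIdx_decomp x L R hxL] at hprev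
    rw [show L.length + 1 - 1 = L.length from rfl, wordext_prev n x L R] at hprev
    have hWlast : ∀ w ∈ L.getLast?, x < w := by
      intro w hw
      rw [Option.mem_def] at hw
      rw [hw] at hprev
      exact hprev
    have hw2 : L.reverse.takeWhile (fun y => decide (y < x)) = [] := by
      cases hrev : L.reverse with
      | nil => rfl
      | cons a t =>
        have ha : L.getLast? = some a := by
          rw [← List.head?_reverse, hrev]; rfl
        have : x < a := hWlast a (by rw [ha]; rfl)
        rw [List.takeWhile_cons, if_neg (by simp; omega)]
    have hw1 : (L.reverse.dropWhile (fun y => decide (y < x))).reverse = L := by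
      have := List.takeWhile_append_dropWhile (p := fun y => decide (y < x)) (l := L.reverse)
      rw [hw2, List.nil_append] at this
      rw [this, List.reverse_reverse]
    set B := R.takeWhile (fun y => decide (y < x)) with hBdef
    set C := R.dropWhile (fun y => decide (y < x)) with hCdef
    have hR : R = B ++ C := (List.takeWhile_append_dropWhile (l := R)).symm
    have hB : ∀ b ∈ B, b < x := by
      intro b hb
      have := List.mem_takeWhile_imp hb
      simpa using this
    have hC : ∀ c ∈ C.head?, x < c := by
      intro c hc
      rw [Option.mem_def] at hc
      have hf := head?_dropWhile_false hc
      have hmem : c ∈ R := (List.dropWhile_sublist _).subset (head?_mem hc)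
      have hne : c ≠ x := fun e => hxR (e ▸ hmem)
      simp only [decide_eq_false_iff_not, not_lt] at hf
      omega
    rw [hw1, hw2, s231_eq_g, s231_eq_g]
    have hkey := g_key x L B C hxL hWlast hB hC
    have e1 : L ++ B ++ x :: (List.reverse [] ++ C) = L ++ B ++ x :: C := by simp
    rw [e1, hR]
    simpa using hkey.symm


end FS
end
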